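/- For B, F with finite Haar expansion there is an absolute constant C such that ‖Δ(B,F)‖_{SBMO} ≤ C ‖π_B‖ · ‖F‖_{SBMO}, using that P_I Δ(B,F) applied to e equals Δ_{B*}(P_I F_e) so that ‖P_I Δ(B,F)e‖_{L²(T,H)} ≤ ‖π_B‖ · ‖P_I F_e‖_{L²(T,H)}. -/

import Mathlib

open MeasureTheory ENNReal ContinuousLinearMap
open scoped Classical NNReal

noncomputable section

/-- A dyadic subinterval of the unit circle `[0,1)`, given by generation `n`
and position `k < 2 ^ n`; it represents `[k/2^n, (k+1)/2^n)`. -/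
structure DyadicInterval where
  n : ℕ
  k : ℕ
  hk : k < 2 ^ n

namespace DyadicInterval

/-- The underlying set of a dyadic interval. -/
def set (I : DyadicInterval) : Set ℝ :=
  Set.Ico ((I.k : ℝ) / 2 ^ I.n) (((I.k : ℝ) + 1) / 2 ^ I.n)

/-- The length `|I|` of a dyadic interval. -/
def len (I : DyadicInterval) : ℝ := ((2 : ℝ) ^ I.n)⁻¹

/-- The left half `I⁺`. -/
def left (I : DyadicInterval) : DyadicInterval :=
  ⟨I.n + 1, 2 * I.k, by have := I.hk; omega⟩

/-- The right half `I⁻`. -/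
def right (I : DyadicInterval) : DyadicInterval :=
  ⟨I.n + 1, 2 * I.k + 1, by have := I.hk; omega⟩

/-- The indicator function `χ_I`. -/
def ind (I : DyadicInterval) : ℝ → ℝ := Set.indicator I.set fun _ => (1 : ℝ)

/-- The Haar function `h_I = |I|^{-1/2} (χ_{I⁺} - χ_{I⁻})`. -/
def haar (I : DyadicInterval) : ℝ → ℝ :=
  fun t => (Real.sqrt I.len)⁻¹ * (I.left.ind t - I.right.ind t)

end DyadicInterval

/-- Normalized Lebesgue measure on the circle, realized as `[0,1) ⊆ ℝ`. -/
def circleMeasure : Measure ℝ := volume.restrict (Set.Ico (0 : ℝ) 1)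

/-- Haar coefficient `f_I = ∫ f h_I`. -/
def haarCoeff {E : Type*} [NormedAddCommGroup E] [NormedSpace ℝ E]
    (f : ℝ → E) (I : DyadicInterval) : E :=
  ∫ t, I.haar t • f t ∂circleMeasure

/-- Average `m_I f = |I|⁻¹ ∫_I f`. -/
def avg {E : Type*} [NormedAddCommGroup E] [NormedSpace ℝ E]
    (f : ℝ → E) (I : DyadicInterval) : E :=
  I.len⁻¹ • ∫ t in I.set, f t

variable {H : Type*} [NormedAddCommGroup H] [InnerProductSpace ℂ H] [CompleteSpace H]

/-- An operator-valued function with finite formal Haar expansion is recorded by its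
finitely supported family of Haar coefficients `B_I ∈ L(H)`. -/
abbrev OpCoeffs (H : Type*) [NormedAddCommGroup H] [InnerProductSpace ℂ H] :=
  DyadicInterval →₀ (H →L[ℂ] H)

/-- The function `B = ∑_I h_I B_I`. -/
def Bfun (b : OpCoeffs H) : ℝ → (H →L[ℂ] H) :=
  fun t => ∑ I ∈ b.support, I.haar t • b I

/-- The dyadic paraproduct `π_B f = ∑_I B_I (m_I f) h_I`. -/
def para (b : OpCoeffs H) (f : ℝ → H) : ℝ → H :=
  fun t => ∑ I ∈ b.support, I.haar t • (b I) (avg f I)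

/-- The operator `Δ_B f = ∑_I B_I (f_I) χ_I / |I|`. -/
def delta (b : OpCoeffs H) (f : ℝ → H) : ℝ → H :=
  fun t => ∑ I ∈ b.support, (I.len⁻¹ * I.ind t) • (b I) (haarCoeff f I)

/-- The Haar projection `P_I B = ∑_{J ⊆ I} h_J B_J` for `B` with finite Haar expansion. -/
def PIB (b : OpCoeffs H) (I : DyadicInterval) : ℝ → (H →L[ℂ] H) :=
  fun t => ∑ J ∈ b.support.filter fun J => J.set ⊆ I.set, J.haar t • b J

/-- The Haar projection `P_I G = ∑_{J ⊆ I} h_J G_J` for a general operator-valued `G`. -/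
def PIBF (G : ℝ → (H →L[ℂ] H)) (I : DyadicInterval) : ℝ → (H →L[ℂ] H) :=
  fun t => ∑' J : {J : DyadicInterval // J.set ⊆ I.set}, (J : DyadicInterval).haar t • haarCoeff G J

/-- The multiplier `Λ_B f = ∑_I (P_I B)(f_I) h_I`. -/
def Lambda (b : OpCoeffs H) (f : ℝ → H) : ℝ → H :=
  fun t => ∑' I : DyadicInterval, I.haar t • (PIB b I t) (haarCoeff f I)

/-- The multiplier `Λ_G f = ∑_I (P_I G)(f_I) h_I` for a general symbol `G`. -/
def LambdaF (G : ℝ → (H →L[ℂ] H)) (f : ℝ → H) : ℝ → H :=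
  fun t => ∑' I : DyadicInterval, I.haar t • (PIBF G I t) (haarCoeff f I)

/-- The paraproduct `π_G f = ∑_I G_I (m_I f) h_I` for a general symbol `G`. -/
def paraF (G : ℝ → (H →L[ℂ] H)) (f : ℝ → H) : ℝ → H :=
  fun t => ∑' I : DyadicInterval, I.haar t • (haarCoeff G I) (avg f I)

/-- The adjoint `π_G^* f = ∑_I G_I^* (f_I) χ_I/|I|` of the paraproduct with symbol `G`. -/
def paraStarF (G : ℝ → (H →L[ℂ] H)) (f : ℝ → H) : ℝ → H :=
  fun t => ∑' I : DyadicInterval,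
    (I.len⁻¹ * I.ind t) • (ContinuousLinearMap.adjoint (haarCoeff G I)) (haarCoeff f I)

/-- The coefficients of `B^*`, i.e. `I ↦ B_I^*`. -/
def adjC (b : OpCoeffs H) : OpCoeffs H :=
  b.mapRange (fun A => ContinuousLinearMap.adjoint A) (by simp)

/-- The sweep `S_B = ∑_I B_I^* B_I χ_I / |I|`. -/
def sweep (b : OpCoeffs H) : ℝ → (H →L[ℂ] H) :=
  fun t => ∑ I ∈ b.support,
    (I.len⁻¹ * I.ind t) • (ContinuousLinearMap.adjoint (b I) ∘L b I)

/-- The bilinear sweep `Δ(B,F) = ∑_J B_J^* F_J χ_J / |J|`. -/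
def DeltaBil (b F : OpCoeffs H) : ℝ → (H →L[ℂ] H) :=
  fun t => ∑ J ∈ b.support ∪ F.support,
    (J.len⁻¹ * J.ind t) • (ContinuousLinearMap.adjoint (b J) ∘L F J)

/-- The block diagonal operator `D_B (h_I ⊗ x) = h_I |I|⁻¹ ∑_{J ⊊ I} B_J^* B_J x`. -/
def Dop (b : OpCoeffs H) (f : ℝ → H) : ℝ → H :=
  fun t => ∑' I : DyadicInterval, I.haar t •
    (I.len⁻¹ • ∑ J ∈ b.support.filter fun J => J.set ⊂ I.set,
      (ContinuousLinearMap.adjoint (b J) ∘L b J)) (haarCoeff f I)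

/-- The block diagonal operator `D_{B,F} (h_I ⊗ x) = h_I |I|⁻¹ ∑_{J ⊊ I} B_J^* F_J x`. -/
def DopBil (b F : OpCoeffs H) (f : ℝ → H) : ℝ → H :=
  fun t => ∑' I : DyadicInterval, I.haar t •
    (I.len⁻¹ • ∑ J ∈ (b.support ∪ F.support).filter fun J => J.set ⊂ I.set,
      (ContinuousLinearMap.adjoint (b J) ∘L F J)) (haarCoeff f I)

/-- The operator norm of a map on `L²(𝕋, H)`, where `L²(𝕋,H)` is realized as the
(mean-zero) closed span of the Haar system `f = ∑_I f_I h_I`. -/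
def l2NormOp (T : (ℝ → H) → (ℝ → H)) : ℝ≥0∞ :=
  ⨆ f : {f : ℝ → H // MemLp f 2 circleMeasure ∧ (∫ t, f t ∂circleMeasure) = 0 ∧
      eLpNorm f 2 circleMeasure ≤ 1},
    eLpNorm (T f.1) 2 circleMeasure

/-- The Haar multiplier norm of a family `(Φ_I)_{I ∈ D}`, i.e. the norm of
`ℓ²(D,H) → L²(𝕋,H)`, `(f_I) ↦ ∑_I Φ_I (f_I) h_I`. -/
def multNorm (Φ : DyadicInterval → ℝ → (H →L[ℂ] H)) : ℝ≥0∞ :=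
  ⨆ c : {c : DyadicInterval →₀ H // ∑ I ∈ c.support, ‖c I‖ ^ 2 ≤ 1},
    eLpNorm (fun t => ∑ I ∈ (c : DyadicInterval →₀ H).support,
      I.haar t • (Φ I t) ((c : DyadicInterval →₀ H) I)) 2 circleMeasure

/-- The dyadic BMO norm of a vector-valued function. -/
def bmoNorm {E : Type*} [NormedAddCommGroup E] [NormedSpace ℝ E] (f : ℝ → E) : ℝ≥0∞ :=
  ⨆ I : DyadicInterval,
    ENNReal.ofReal (I.len⁻¹ * ∫ t in I.set, ‖f t - avg f I‖ ^ 2) ^ (1/2 : ℝ)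

/-- The strong BMO norm `‖B‖_{SBMO} = sup_{‖e‖=1} ‖B e‖_{BMO(H)}`. -/
def sbmoNorm (B : ℝ → (H →L[ℂ] H)) : ℝ≥0∞ :=
  ⨆ e : {e : H // ‖e‖ = 1}, bmoNorm fun t => B t e.1

/-- The `BMO_so` norm `‖B‖ = ‖B‖_{SBMO} + ‖B^*‖_{SBMO}`. -/
def bmosoNorm (B : ℝ → (H →L[ℂ] H)) : ℝ≥0∞ :=
  sbmoNorm B + sbmoNorm fun t => ContinuousLinearMap.adjoint (B t)

/-- A family of independent fair random signs `(σ_I)_{I ∈ D}`, modelling the product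
probability space `Σ = {-1,1}^D`. -/
structure SignSpace {Ω : Type*} [MeasurableSpace Ω] (ℙ : Measure Ω)
    (σ : DyadicInterval → Ω → ℝ) : Prop where
  prob : IsProbabilityMeasure ℙ
  meas : ∀ I, Measurable (σ I)
  values : ∀ I, ∀ ω, σ I ω = 1 ∨ σ I ω = -1
  indep : ProbabilityTheory.iIndepFun σ ℙ
  fair : ∀ I, ℙ {ω | σ I ω = 1} = 1/2

end

noncomputable section
namespace DyadicInterval

lemma ext' {I J : DyadicInterval} (hn : I.n = J.n) (hk : I.k = J.k) : I = J := by
  cases I; cases J; simp_all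

lemma two_pow_pos' (n : ℕ) : (0:ℝ) < 2 ^ n := by positivity

lemma lt_right (I : DyadicInterval) : (I.k : ℝ) / 2 ^ I.n < ((I.k:ℝ)+1) / 2 ^ I.n := by
  have h := two_pow_pos' I.n
  rw [div_lt_div_iff₀ h h]; nlinarith

lemma len_pos (I : DyadicInterval) : 0 < I.len := by
  simp only [len]; positivity

lemma subset_iff {J K : DyadicInterval} :
    J.set ⊆ K.set ↔ ((K.k:ℝ)/2^K.n ≤ (J.k:ℝ)/2^J.n ∧
      ((J.k:ℝ)+1)/2^J.n ≤ ((K.k:ℝ)+1)/2^K.n) :=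
  Set.Ico_subset_Ico_iff (lt_right J)

lemma n_le_of_subset {J K : DyadicInterval} (h : J.set ⊆ K.set) : K.n ≤ J.n := by
  rw [subset_iff] at h
  obtain ⟨h1, h2⟩ := h
  by_contra hc
  push_neg at hc
  have h3 : (2:ℝ)^J.n < 2^K.n := by
    exact pow_lt_pow_right₀ (by norm_num) hc
  have hJ := two_pow_pos' J.n
  have hK := two_pow_pos' K.n
  rw [div_le_div_iff₀ hK hJ] at h1
  rw [div_le_div_iff₀ hJ hK] at h2
  nlinarith

lemma k_bounds_of_subset {J K : DyadicInterval} (h : J.set ⊆ K.set) :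
    K.k * 2^(J.n - K.n) ≤ J.k ∧ J.k + 1 ≤ (K.k+1) * 2^(J.n - K.n) := by
  have hn := n_le_of_subset h
  rw [subset_iff] at h
  obtain ⟨h1, h2⟩ := h
  have hJ := two_pow_pos' J.n
  have hK := two_pow_pos' K.n
  rw [div_le_div_iff₀ hK hJ] at h1
  rw [div_le_div_iff₀ hJ hK] at h2
  have hsplit : (2:ℝ)^J.n = 2^(J.n - K.n) * 2^K.n := by
    rw [← pow_add]; congr 1; omega
  constructor
  · have : (K.k:ℝ) * 2^(J.n - K.n) ≤ J.k := by
      rw [hsplit] at h1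
      have := two_pow_pos' K.n
      nlinarith
    exact_mod_cast this
  · have : ((J.k:ℝ)+1) ≤ (K.k+1) * 2^(J.n - K.n) := by
      rw [hsplit] at h2
      nlinarith
    exact_mod_cast this

lemma subset_of_nat {J K : DyadicInterval} (hn : K.n ≤ J.n)
    (h1 : K.k * 2^(J.n - K.n) ≤ J.k) (h2 : J.k + 1 ≤ (K.k+1) * 2^(J.n - K.n)) :
    J.set ⊆ K.set := by
  rw [subset_iff]
  have hJ := two_pow_pos' J.n
  have hK := two_pow_pos' K.n
  have hsplit : (2:ℝ)^J.n = 2^(J.n - K.n) * 2^K.n := by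
    rw [← pow_add]; congr 1; omega
  have h1' : (K.k:ℝ) * 2^(J.n - K.n) ≤ J.k := by exact_mod_cast h1
  have h2' : ((J.k:ℝ)+1) ≤ ((K.k:ℝ)+1) * 2^(J.n - K.n) := by exact_mod_cast h2
  constructor
  · rw [div_le_div_iff₀ hK hJ, hsplit]; nlinarith
  · rw [div_le_div_iff₀ hJ hK, hsplit]; nlinarith

/-- the ancestor of `K` at generation `m`. -/
def anc (K : DyadicInterval) (m : ℕ) : DyadicInterval :=
  ⟨m, K.k / 2^(K.n - m), by
    have hK := K.hk
    rw [Nat.div_lt_iff_lt_mul (Nat.pow_pos (by norm_num))]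
    calc K.k < 2 ^ K.n := hK
    _ ≤ 2 ^ (m + (K.n - m)) := Nat.pow_le_pow_right (by norm_num) (by omega)
    _ = 2 ^ m * 2 ^ (K.n - m) := by rw [pow_add]⟩

@[simp] lemma anc_n (K : DyadicInterval) (m : ℕ) : (K.anc m).n = m := rfl
@[simp] lemma anc_k (K : DyadicInterval) (m : ℕ) : (K.anc m).k = K.k / 2^(K.n - m) := rfl

lemma anc_self (K : DyadicInterval) : K.anc K.n = K := by
  refine ext' rfl ?_; simp

lemma subset_anc {K : DyadicInterval} {m : ℕ} (h : m ≤ K.n) : K.set ⊆ (K.anc m).set := by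
  apply subset_of_nat (by simpa using h)
  · simpa using Nat.div_mul_le_self K.k (2^(K.n - m))
  · simp only [anc_n, anc_k]
    set d := 2^(K.n - m) with hd
    have hdpos : 0 < d := Nat.pow_pos (by norm_num)
    have h1 := Nat.div_add_mod K.k d
    have h2 := Nat.mod_lt K.k hdpos
    calc K.k + 1 = d * (K.k / d) + K.k % d + 1 := by omega
    _ ≤ d * (K.k / d) + d := by omega
    _ = (K.k / d + 1) * d := by ring

lemma eq_anc_of_subset {J K : DyadicInterval} (h : K.set ⊆ J.set) :
    J.n ≤ K.n ∧ J = K.anc J.n := by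
  have hn := n_le_of_subset h
  refine ⟨hn, ?_⟩
  obtain ⟨h1, h2⟩ := k_bounds_of_subset h
  refine ext' rfl ?_
  simp only [anc_k]
  symm
  apply Nat.div_eq_of_lt_le
  · exact h1
  · calc K.k < K.k + 1 := Nat.lt_succ_self _
    _ ≤ (J.k + 1) * 2^(K.n - J.n) := h2
    _ = _ := by ring

lemma set_inj {J K : DyadicInterval} (h : J.set = K.set) : J = K := by
  obtain ⟨hn1, he1⟩ := eq_anc_of_subset h.le
  obtain ⟨hn2, he2⟩ := eq_anc_of_subset h.ge
  have : J.n = K.n := le_antisymm hn2 hn1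
  rw [he2, this, anc_self]

lemma anc_anc {K : DyadicInterval} {m m' : ℕ} (h1 : m' ≤ m) (h2 : m ≤ K.n) :
    (K.anc m).anc m' = K.anc m' := by
  refine ext' rfl ?_
  simp only [anc_k, anc_n]
  rw [Nat.div_div_eq_div_mul, ← pow_add]
  congr 2
  omega

lemma anc_subset_anc {K : DyadicInterval} {m m' : ℕ} (h1 : m' ≤ m) (h2 : m ≤ K.n) :
    (K.anc m).set ⊆ (K.anc m').set := by
  rw [← anc_anc h1 h2]
  exact subset_anc (by simpa using h1)

lemma subset_of_meets {J K : DyadicInterval} (hn : K.n ≤ J.n) {x : ℝ}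
    (hx1 : x ∈ J.set) (hx2 : x ∈ K.set) : J.set ⊆ K.set := by
  obtain ⟨ha1, ha2⟩ := hx1
  obtain ⟨hb1, hb2⟩ := hx2
  have hJ := two_pow_pos' J.n
  have hK := two_pow_pos' K.n
  have hsplit : (2:ℝ)^J.n = 2^(J.n - K.n) * 2^K.n := by
    rw [← pow_add]; congr 1; omega
  apply subset_of_nat hn
  · have hr : (K.k:ℝ) * 2^(J.n - K.n) < J.k + 1 := by
      have : (K.k:ℝ)/2^K.n < ((J.k:ℝ)+1)/2^J.n := lt_of_le_of_lt hb1 ha2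
      rw [div_lt_div_iff₀ hK hJ, hsplit] at this
      nlinarith
    have : K.k * 2^(J.n - K.n) < J.k + 1 := by exact_mod_cast hr
    omega
  · have hr : (J.k:ℝ) < ((K.k:ℝ)+1) * 2^(J.n - K.n) := by
      have : (J.k:ℝ)/2^J.n < ((K.k:ℝ)+1)/2^K.n := lt_of_le_of_lt ha1 hb2
      rw [div_lt_div_iff₀ hJ hK, hsplit] at this
      nlinarith
    have : J.k < (K.k+1) * 2^(J.n - K.n) := by exact_mod_cast hr
    omega

lemma trichotomy (J K : DyadicInterval) :
    J.set ⊆ K.set ∨ K.set ⊆ J.set ∨ Disjoint J.set K.set := by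
  by_cases hd : Disjoint J.set K.set
  · exact Or.inr (Or.inr hd)
  obtain ⟨x, hx1, hx2⟩ := Set.not_disjoint_iff.mp hd
  rcases le_total K.n J.n with h | h
  · exact Or.inl (subset_of_meets h hx1 hx2)
  · exact Or.inr (Or.inl (subset_of_meets h hx2 hx1))

@[simp] lemma left_n (I : DyadicInterval) : I.left.n = I.n + 1 := rfl
@[simp] lemma left_k (I : DyadicInterval) : I.left.k = 2 * I.k := rfl
@[simp] lemma right_n (I : DyadicInterval) : I.right.n = I.n + 1 := rfl
@[simp] lemma right_k (I : DyadicInterval) : I.right.k = 2 * I.k + 1 := rfl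

lemma left_set (I : DyadicInterval) :
    I.left.set = Set.Ico ((I.k:ℝ)/2^I.n) ((2*(I.k:ℝ)+1)/2^(I.n+1)) := by
  have h1 : ((I.left.k : ℝ)) / 2 ^ I.left.n = (I.k:ℝ)/2^I.n := by
    simp only [left_n, left_k]; push_cast; rw [pow_succ]; field_simp
  have h2 : ((I.left.k : ℝ) + 1) / 2 ^ I.left.n = (2*(I.k:ℝ)+1)/2^(I.n+1) := by
    simp only [left_n, left_k]; push_cast; ring_nf
  rw [set, h1, h2]

lemma right_set (I : DyadicInterval) :
    I.right.set = Set.Ico ((2*(I.k:ℝ)+1)/2^(I.n+1)) (((I.k:ℝ)+1)/2^I.n) := by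
  have h1 : ((I.right.k : ℝ)) / 2 ^ I.right.n = (2*(I.k:ℝ)+1)/2^(I.n+1) := by
    simp only [right_n, right_k]; push_cast; ring_nf
  have h2 : ((I.right.k : ℝ) + 1) / 2 ^ I.right.n = ((I.k:ℝ)+1)/2^I.n := by
    simp only [right_n, right_k]; push_cast; rw [pow_succ]; field_simp; ring
  rw [set, h1, h2]

lemma mid_mem : ∀ (I : DyadicInterval),
    (I.k:ℝ)/2^I.n ≤ (2*(I.k:ℝ)+1)/2^(I.n+1) ∧ (2*(I.k:ℝ)+1)/2^(I.n+1) ≤ ((I.k:ℝ)+1)/2^I.n := by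
  intro I
  have h1 := two_pow_pos' I.n
  have h2 := two_pow_pos' (I.n+1)
  constructor
  · rw [div_le_div_iff₀ h1 h2, pow_succ]; nlinarith
  · rw [div_le_div_iff₀ h2 h1, pow_succ]; nlinarith

lemma left_union_right (I : DyadicInterval) : I.left.set ∪ I.right.set = I.set := by
  rw [left_set, right_set]
  exact Set.Ico_union_Ico_eq_Ico (mid_mem I).1 (mid_mem I).2

lemma left_right_disjoint (I : DyadicInterval) : Disjoint I.left.set I.right.set := by
  rw [left_set, right_set]
  exact Set.Ico_disjoint_Ico_same

lemma left_subset (I : DyadicInterval) : I.left.set ⊆ I.set := by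
  intro x hx
  rw [← left_union_right I]; exact Set.mem_union_left _ hx

lemma right_subset (I : DyadicInterval) : I.right.set ⊆ I.set := by
  intro x hx
  rw [← left_union_right I]; exact Set.mem_union_right _ hx

lemma len_left (I : DyadicInterval) : I.left.len = I.len / 2 := by
  simp only [len, left_n, pow_succ]
  field_simp

lemma len_right (I : DyadicInterval) : I.right.len = I.len / 2 := by
  simp only [len, right_n, pow_succ]
  field_simp

lemma subset_left_or_right {J K : DyadicInterval} (h : K.set ⊆ J.set) (hne : K ≠ J) :
    K.set ⊆ J.left.set ∨ K.set ⊆ J.right.set := by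
  obtain ⟨hn, he⟩ := eq_anc_of_subset h
  have hlt : J.n < K.n := by
    rcases Nat.lt_or_ge J.n K.n with h' | h'
    · exact h'
    · exfalso
      have : J.n = K.n := le_antisymm hn h'
      apply hne
      rw [he, this, anc_self]
  have hsub : K.set ⊆ (K.anc (J.n+1)).set := subset_anc (by omega)
  have hJk : J.k = K.k / 2^(K.n - J.n) := by conv_lhs => rw [he, anc_k]
  have hkk : (K.anc (J.n+1)).k / 2 = J.k := by
    rw [hJk]
    simp only [anc_k]
    rw [Nat.div_div_eq_div_mul, ← pow_succ]
    have he' : K.n - (J.n+1) + 1 = K.n - J.n := by omega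
    rw [he']
  have : (K.anc (J.n+1)).k = 2 * J.k ∨ (K.anc (J.n+1)).k = 2 * J.k + 1 := by omega
  rcases this with h' | h'
  · left
    have : K.anc (J.n+1) = J.left := ext' rfl (by simpa using h')
    rwa [this] at hsub
  · right
    have : K.anc (J.n+1) = J.right := ext' rfl (by simpa using h')
    rwa [this] at hsub

lemma set_subset_Ico01 (I : DyadicInterval) : I.set ⊆ Set.Ico (0:ℝ) 1 := by
  intro x hx
  obtain ⟨h1, h2⟩ := hx
  have hp := two_pow_pos' I.n
  have hk : (I.k:ℝ) + 1 ≤ 2^I.n := by exact_mod_cast I.hk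
  constructor
  · have : (0:ℝ) ≤ (I.k:ℝ)/2^I.n := by positivity
    linarith
  · have : ((I.k:ℝ)+1)/2^I.n ≤ 1 := by
      rw [div_le_one hp]; exact hk
    linarith

end DyadicInterval
end
noncomputable section
open MeasureTheory
namespace DyadicInterval

lemma endpoint_diff (I : DyadicInterval) :
    ((I.k:ℝ)+1)/2^I.n - (I.k:ℝ)/2^I.n = I.len := by
  rw [len]; field_simp; ring

instance : IsFiniteMeasure circleMeasure := by
  constructor
  rw [circleMeasure, Measure.restrict_apply_univ, Real.volume_Ico]
  exact ENNReal.ofReal_lt_top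

lemma measurableSet_set (I : DyadicInterval) : MeasurableSet I.set := measurableSet_Ico

lemma circle_set (I : DyadicInterval) : circleMeasure I.set = ENNReal.ofReal I.len := by
  rw [circleMeasure, Measure.restrict_apply I.measurableSet_set,
    Set.inter_eq_left.mpr I.set_subset_Ico01, set, Real.volume_Ico, endpoint_diff]

lemma ind_of_mem {I : DyadicInterval} {t : ℝ} (h : t ∈ I.set) : I.ind t = 1 :=
  Set.indicator_of_mem h _

lemma ind_of_not_mem {I : DyadicInterval} {t : ℝ} (h : t ∉ I.set) : I.ind t = 0 :=
  Set.indicator_of_notMem h _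

lemma ind_nonneg (I : DyadicInterval) (t : ℝ) : 0 ≤ I.ind t := by
  by_cases h : t ∈ I.set
  · rw [ind_of_mem h]; norm_num
  · rw [ind_of_not_mem h]

lemma abs_ind_le (I : DyadicInterval) (t : ℝ) : |I.ind t| ≤ 1 := by
  by_cases h : t ∈ I.set
  · rw [ind_of_mem h]; norm_num
  · rw [ind_of_not_mem h]; norm_num

lemma measurable_ind (I : DyadicInterval) : Measurable I.ind :=
  measurable_const.indicator I.measurableSet_set

lemma measurable_haar (I : DyadicInterval) : Measurable I.haar := by
  unfold haar
  exact (measurable_const.mul ((I.left.measurable_ind).sub I.right.measurable_ind))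

lemma abs_haar_le (I : DyadicInterval) (t : ℝ) : |I.haar t| ≤ (Real.sqrt I.len)⁻¹ * 2 := by
  unfold haar
  rw [abs_mul]
  have h1 : |(Real.sqrt I.len)⁻¹| = (Real.sqrt I.len)⁻¹ := by
    rw [abs_of_nonneg]; positivity
  rw [h1]
  have h2 : |I.left.ind t - I.right.ind t| ≤ 2 := by
    have := I.left.abs_ind_le t
    have := I.right.abs_ind_le t
    have h3 := abs_sub (I.left.ind t) (I.right.ind t)
    calc |I.left.ind t - I.right.ind t| ≤ |I.left.ind t| + |I.right.ind t| := abs_sub _ _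
    _ ≤ 2 := by linarith
  have : (0:ℝ) ≤ (Real.sqrt I.len)⁻¹ := by positivity
  nlinarith

lemma haar_eq_zero_of_not_mem {I : DyadicInterval} {t : ℝ} (h : t ∉ I.set) : I.haar t = 0 := by
  unfold haar
  rw [ind_of_not_mem (fun hc => h (I.left_subset hc)),
    ind_of_not_mem (fun hc => h (I.right_subset hc))]
  ring

lemma integrable_bdd {f : ℝ → ℝ} (hf : Measurable f) {C : ℝ} (h : ∀ t, |f t| ≤ C) :
    Integrable f circleMeasure := by
  refine (integrable_const C).mono' hf.aestronglyMeasurable (ae_of_all _ ?_)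
  intro t; simpa using h t

lemma integrable_ind (I : DyadicInterval) : Integrable I.ind circleMeasure :=
  integrable_bdd I.measurable_ind I.abs_ind_le

lemma integrable_haar (I : DyadicInterval) : Integrable I.haar circleMeasure :=
  integrable_bdd I.measurable_haar I.abs_haar_le

lemma integrable_ind_mul_ind (J K : DyadicInterval) :
    Integrable (fun t => J.ind t * K.ind t) circleMeasure := by
  refine integrable_bdd (J.measurable_ind.mul K.measurable_ind) (C := 1) fun t => ?_
  rw [abs_mul]
  calc |J.ind t| * |K.ind t| ≤ 1 * 1 :=
    mul_le_mul (J.abs_ind_le t) (K.abs_ind_le t) (abs_nonneg _) zero_le_one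
  _ = 1 := by ring

lemma integrable_haar_mul_ind (J K : DyadicInterval) :
    Integrable (fun t => J.haar t * K.ind t) circleMeasure := by
  refine integrable_bdd (J.measurable_haar.mul K.measurable_ind)
    (C := (Real.sqrt J.len)⁻¹ * 2) fun t => ?_
  rw [abs_mul]
  calc |J.haar t| * |K.ind t| ≤ ((Real.sqrt J.len)⁻¹ * 2) * 1 :=
    mul_le_mul (J.abs_haar_le t) (K.abs_ind_le t) (abs_nonneg _) (by positivity)
  _ = _ := by ring

lemma integrable_haar_mul_haar (J K : DyadicInterval) :
    Integrable (fun t => J.haar t * K.haar t) circleMeasure := by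
  refine integrable_bdd (J.measurable_haar.mul K.measurable_haar)
    (C := ((Real.sqrt J.len)⁻¹ * 2) * ((Real.sqrt K.len)⁻¹ * 2)) fun t => ?_
  rw [abs_mul]
  exact mul_le_mul (J.abs_haar_le t) (K.abs_haar_le t) (abs_nonneg _) (by positivity)

lemma integral_ind (I : DyadicInterval) : ∫ t, I.ind t ∂circleMeasure = I.len := by
  rw [show I.ind = Set.indicator I.set (fun _ => (1:ℝ)) from rfl,
    integral_indicator I.measurableSet_set]
  rw [setIntegral_const, measureReal_def, circle_set, ENNReal.toReal_ofReal I.len_pos.le, smul_eq_mul, mul_one]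

lemma ind_mul_ind_of_subset {J K : DyadicInterval} (h : J.set ⊆ K.set) (t : ℝ) :
    J.ind t * K.ind t = J.ind t := by
  by_cases ht : t ∈ J.set
  · rw [ind_of_mem ht, ind_of_mem (h ht)]; ring
  · rw [ind_of_not_mem ht]; ring

lemma ind_mul_ind_of_disjoint {J K : DyadicInterval} (h : Disjoint J.set K.set) (t : ℝ) :
    J.ind t * K.ind t = 0 := by
  by_cases ht : t ∈ J.set
  · rw [ind_of_not_mem (fun hc => (Set.disjoint_left.mp h) ht hc)]; ring
  · rw [ind_of_not_mem ht]; ring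

lemma intII_subset {J K : DyadicInterval} (h : J.set ⊆ K.set) :
    ∫ t, J.ind t * K.ind t ∂circleMeasure = J.len := by
  simp_rw [ind_mul_ind_of_subset h]; exact integral_ind J

lemma intII_subset' {J K : DyadicInterval} (h : K.set ⊆ J.set) :
    ∫ t, J.ind t * K.ind t ∂circleMeasure = K.len := by
  simp_rw [fun t => mul_comm (J.ind t) (K.ind t)]; exact intII_subset h

lemma intII_disjoint {J K : DyadicInterval} (h : Disjoint J.set K.set) :
    ∫ t, J.ind t * K.ind t ∂circleMeasure = 0 := by
  simp_rw [ind_mul_ind_of_disjoint h]; exact integral_zero _ _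

lemma integral_haar_mul_ind_expand (J K : DyadicInterval) :
    ∫ t, J.haar t * K.ind t ∂circleMeasure =
      (Real.sqrt J.len)⁻¹ * ((∫ t, J.left.ind t * K.ind t ∂circleMeasure)
        - ∫ t, J.right.ind t * K.ind t ∂circleMeasure) := by
  have hpt : ∀ t, J.haar t * K.ind t =
      (Real.sqrt J.len)⁻¹ * (J.left.ind t * K.ind t)
        - (Real.sqrt J.len)⁻¹ * (J.right.ind t * K.ind t) := by
    intro t; rw [haar]; ring
  simp_rw [hpt]
  rw [integral_sub ((integrable_ind_mul_ind J.left K).const_mul _)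
    ((integrable_ind_mul_ind J.right K).const_mul _),
    integral_const_mul, integral_const_mul]
  ring

lemma r_left {J K : DyadicInterval} (h : K.set ⊆ J.left.set) :
    ∫ t, J.haar t * K.ind t ∂circleMeasure = (Real.sqrt J.len)⁻¹ * K.len := by
  rw [integral_haar_mul_ind_expand, intII_subset' h,
    intII_disjoint (Set.disjoint_of_subset_right h (J.left_right_disjoint).symm)]
  ring

lemma r_right {J K : DyadicInterval} (h : K.set ⊆ J.right.set) :
    ∫ t, J.haar t * K.ind t ∂circleMeasure = -((Real.sqrt J.len)⁻¹ * K.len) := by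
  rw [integral_haar_mul_ind_expand, intII_subset' h,
    intII_disjoint (Set.disjoint_of_subset_right h (J.left_right_disjoint))]
  ring

lemma r_sup {J K : DyadicInterval} (h : J.set ⊆ K.set) :
    ∫ t, J.haar t * K.ind t ∂circleMeasure = 0 := by
  rw [integral_haar_mul_ind_expand,
    intII_subset ((J.left_subset).trans h), intII_subset ((J.right_subset).trans h),
    len_left, len_right]
  ring

lemma r_disj {J K : DyadicInterval} (h : Disjoint J.set K.set) :
    ∫ t, J.haar t * K.ind t ∂circleMeasure = 0 := by
  rw [integral_haar_mul_ind_expand,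
    intII_disjoint (Set.disjoint_of_subset_left J.left_subset h),
    intII_disjoint (Set.disjoint_of_subset_left J.right_subset h)]
  ring

lemma sqrt_inv_mul_self (I : DyadicInterval) :
    (Real.sqrt I.len)⁻¹ * (Real.sqrt I.len)⁻¹ = I.len⁻¹ := by
  rw [← mul_inv, Real.mul_self_sqrt I.len_pos.le]

lemma integral_haar_mul_haar_self (I : DyadicInterval) :
    ∫ t, I.haar t * I.haar t ∂circleMeasure = 1 := by
  have hA : Integrable (fun t => I.len⁻¹ * (I.left.ind t * I.left.ind t)) circleMeasure :=
    (integrable_ind_mul_ind I.left I.left).const_mul _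
  have hB : Integrable (fun t => I.len⁻¹ * (I.right.ind t * I.right.ind t)) circleMeasure :=
    (integrable_ind_mul_ind I.right I.right).const_mul _
  have hC : Integrable (fun t => 2 * (I.len⁻¹ * (I.left.ind t * I.right.ind t)))
      circleMeasure := ((integrable_ind_mul_ind I.left I.right).const_mul _).const_mul _
  have hpt : (fun t => I.haar t * I.haar t) = fun t =>
      (I.len⁻¹ * (I.left.ind t * I.left.ind t) + I.len⁻¹ * (I.right.ind t * I.right.ind t))
        - 2 * (I.len⁻¹ * (I.left.ind t * I.right.ind t)) := by
    funext t
    rw [haar, ← sqrt_inv_mul_self I]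
    ring
  have hAB : Integrable (fun t => I.len⁻¹ * (I.left.ind t * I.left.ind t)
      + I.len⁻¹ * (I.right.ind t * I.right.ind t)) circleMeasure := hA.add hB
  rw [hpt, integral_sub hAB hC, integral_add hA hB, integral_const_mul,
    integral_const_mul, integral_const_mul, integral_const_mul,
    intII_subset (subset_refl _), intII_subset (subset_refl _),
    intII_disjoint I.left_right_disjoint, len_left, len_right]
  have := I.len_pos
  field_simp
  ring

lemma integral_haar_mul_haar_ne {J K : DyadicInterval} (hne : J ≠ K) :
    ∫ t, J.haar t * K.haar t ∂circleMeasure = 0 := by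
  rcases trichotomy J K with h | h | h
  · -- J ⊆ K, J ≠ K
    have h' : J.set ⊆ K.left.set ∨ J.set ⊆ K.right.set := subset_left_or_right h hne
    have hpt : ∀ t, J.haar t * K.haar t =
        (Real.sqrt K.len)⁻¹ * (J.haar t * K.left.ind t)
          - (Real.sqrt K.len)⁻¹ * (J.haar t * K.right.ind t) := by
      intro t; simp only [haar]; ring
    simp_rw [hpt]
    rw [integral_sub ((integrable_haar_mul_ind _ _).const_mul _)
      ((integrable_haar_mul_ind _ _).const_mul _), integral_const_mul, integral_const_mul]
    rcases h' with h' | h'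
    · rw [r_sup h', r_disj (Set.disjoint_of_subset_left h'
        (Set.disjoint_of_subset_left (le_refl _) K.left_right_disjoint))]
      ring
    · rw [r_sup h', r_disj (Set.disjoint_of_subset_left h' K.left_right_disjoint.symm)]
      ring
  · -- K ⊆ J
    have hne' : K ≠ J := fun hc => hne hc.symm
    have h' : K.set ⊆ J.left.set ∨ K.set ⊆ J.right.set := subset_left_or_right h hne'
    have hpt : ∀ t, J.haar t * K.haar t =
        (Real.sqrt J.len)⁻¹ * (K.haar t * J.left.ind t)
          - (Real.sqrt J.len)⁻¹ * (K.haar t * J.right.ind t) := by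
      intro t; simp only [haar]; ring
    simp_rw [hpt]
    rw [integral_sub ((integrable_haar_mul_ind _ _).const_mul _)
      ((integrable_haar_mul_ind _ _).const_mul _), integral_const_mul, integral_const_mul]
    rcases h' with h' | h'
    · rw [r_sup h', r_disj (Set.disjoint_of_subset_left h' J.left_right_disjoint)]
      ring
    · rw [r_sup h', r_disj (Set.disjoint_of_subset_left h' J.left_right_disjoint.symm)]
      ring
  · -- disjoint
    have hpt : ∀ t, J.haar t * K.haar t = 0 := by
      intro t
      by_cases ht : t ∈ J.set
      · rw [haar_eq_zero_of_not_mem (fun hc => (Set.disjoint_left.mp h) ht hc)]; ring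
      · rw [haar_eq_zero_of_not_mem ht]; ring
    simp_rw [hpt]
    exact integral_zero _ _

end DyadicInterval
end
noncomputable section
open MeasureTheory Finset DyadicInterval ContinuousLinearMap

namespace DeltaAux
set_option maxHeartbeats 1000000
set_option synthInstance.maxHeartbeats 400000
set_option linter.unusedSectionVars false

variable {E : Type*} [NormedAddCommGroup E] [NormedSpace ℝ E] [CompleteSpace E]

lemma ind_smul_eq_indicator (I : DyadicInterval) (f : ℝ → E) :
    (fun t => I.ind t • f t) = Set.indicator I.set f := by
  funext t
  by_cases h : t ∈ I.set
  · rw [ind_of_mem h, Set.indicator_of_mem h, one_smul]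
  · rw [ind_of_not_mem h, Set.indicator_of_notMem h, zero_smul]

lemma setIntegral_eq_ind_smul (I : DyadicInterval) (f : ℝ → E) :
    ∫ t in I.set, f t = ∫ t, I.ind t • f t ∂circleMeasure := by
  rw [ind_smul_eq_indicator, integral_indicator I.measurableSet_set]
  unfold circleMeasure
  rw [Measure.restrict_restrict I.measurableSet_set,
    Set.inter_eq_left.mpr I.set_subset_Ico01]

lemma ind_split (I : DyadicInterval) (t : ℝ) :
    I.ind t = I.left.ind t + I.right.ind t := by
  by_cases h : t ∈ I.set
  · rw [← I.left_union_right] at h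
    rcases h with h | h
    · rw [ind_of_mem (I.left_subset h), ind_of_mem h,
        ind_of_not_mem (fun hc => (Set.disjoint_left.mp I.left_right_disjoint) h hc)]
      ring
    · rw [ind_of_mem (I.right_subset h), ind_of_mem h,
        ind_of_not_mem (fun hc => (Set.disjoint_right.mp I.left_right_disjoint) h hc)]
      ring
  · rw [ind_of_not_mem h, ind_of_not_mem (fun hc => h (I.left_subset hc)),
      ind_of_not_mem (fun hc => h (I.right_subset hc))]
    ring

/-- `∫ h_J χ_K`. -/
abbrev rr (J K : DyadicInterval) : ℝ := ∫ t, J.haar t * K.ind t ∂circleMeasure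

lemma r_ne_zero_cases {J K : DyadicInterval} (h : rr J K ≠ 0) :
    K.set ⊆ J.set ∧ J.n < K.n := by
  rcases trichotomy J K with h' | h' | h'
  · exact absurd (r_sup h') h
  · refine ⟨h', ?_⟩
    have h1 : J.n ≤ K.n := n_le_of_subset h'
    rcases Nat.lt_or_ge J.n K.n with h2 | h2
    · exact h2
    · exfalso
      have hn : J.n = K.n := le_antisymm h1 h2
      obtain ⟨_, he⟩ := eq_anc_of_subset h'
      rw [hn, anc_self] at he
      exact h (by rw [he] at h' ⊢; exact r_sup h')
  · exact absurd (r_disj h') h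

/-- all strict dyadic ancestors of elements of `S`. -/
def ancs (S : Finset DyadicInterval) : Finset DyadicInterval :=
  S.biUnion (fun K => (Finset.range K.n).image (fun m => K.anc m))

lemma mem_ancs {S : Finset DyadicInterval} {J K : DyadicInterval} (hK : K ∈ S)
    (h1 : K.set ⊆ J.set) (h2 : J.n < K.n) : J ∈ ancs S := by
  rw [ancs, Finset.mem_biUnion]
  refine ⟨K, hK, ?_⟩
  rw [Finset.mem_image]
  exact ⟨J.n, Finset.mem_range.mpr h2, ((eq_anc_of_subset h1).2).symm⟩

section opcoeffs

variable {H : Type*} [NormedAddCommGroup H] [InnerProductSpace ℂ H] [CompleteSpace H]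

lemma DeltaBil_apply (b F : OpCoeffs H) (t : ℝ) :
    DeltaBil b F t = ∑ K ∈ b.support ∪ F.support,
      (K.len⁻¹ * K.ind t) • (ContinuousLinearMap.adjoint (b K) ∘L F K) := rfl

lemma integrable_scalar_piece (J K : DyadicInterval) :
    Integrable (fun t => J.haar t * (K.len⁻¹ * K.ind t)) circleMeasure := by
  have : (fun t => J.haar t * (K.len⁻¹ * K.ind t))
      = fun t => K.len⁻¹ * (J.haar t * K.ind t) := by funext t; ring
  rw [this]
  exact (integrable_haar_mul_ind J K).const_mul _

lemma haarCoeff_DeltaBil (b F : OpCoeffs H) (J : DyadicInterval) :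
    haarCoeff (DeltaBil b F) J = ∑ K ∈ b.support ∪ F.support,
      (K.len⁻¹ * rr J K) • (ContinuousLinearMap.adjoint (b K) ∘L F K) := by
  rw [haarCoeff]
  have hpt : ∀ t, J.haar t • DeltaBil b F t = ∑ K ∈ b.support ∪ F.support,
      (J.haar t * (K.len⁻¹ * K.ind t)) • (ContinuousLinearMap.adjoint (b K) ∘L F K) := by
    intro t
    rw [DeltaBil_apply, Finset.smul_sum]
    exact Finset.sum_congr rfl fun K _ => by rw [smul_smul]
  simp_rw [hpt]
  rw [integral_finset_sum _ (fun K _ => (integrable_scalar_piece J K).smul_const _)]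
  refine Finset.sum_congr rfl fun K _ => ?_
  rw [integral_smul_const]
  congr 1
  have : (fun t => J.haar t * (K.len⁻¹ * K.ind t))
      = fun t => K.len⁻¹ * (J.haar t * K.ind t) := by funext t; ring
  rw [this, integral_const_mul]

lemma haarCoeff_DeltaBil_support {b F : OpCoeffs H} {J : DyadicInterval}
    (h : haarCoeff (DeltaBil b F) J ≠ 0) : J ∈ ancs (b.support ∪ F.support) := by
  rw [haarCoeff_DeltaBil] at h
  obtain ⟨K, hK, hne⟩ := Finset.exists_ne_zero_of_sum_ne_zero h
  have hr : rr J K ≠ 0 := by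
    intro hc
    apply hne
    rw [hc, mul_zero, zero_smul]
  obtain ⟨h1, h2⟩ := r_ne_zero_cases hr
  exact mem_ancs hK h1 h2

lemma PIBF_eq_sum (b F : OpCoeffs H) (I : DyadicInterval) (t : ℝ) :
    PIBF (DeltaBil b F) I t
      = ∑ J ∈ (ancs (b.support ∪ F.support)).filter (fun J => J.set ⊆ I.set),
          J.haar t • haarCoeff (DeltaBil b F) J := by
  rw [PIBF]
  have h0 : (∑' (J : {J : DyadicInterval // J.set ⊆ I.set}),
      (J : DyadicInterval).haar t • haarCoeff (DeltaBil b F) (J : DyadicInterval))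
      = ∑' (J : DyadicInterval), Set.indicator {J : DyadicInterval | J.set ⊆ I.set}
          (fun J => J.haar t • haarCoeff (DeltaBil b F) J) J :=
    _root_.tsum_subtype {J : DyadicInterval | J.set ⊆ I.set}
      (fun J => J.haar t • haarCoeff (DeltaBil b F) J)
  rw [h0]
  rw [tsum_eq_sum (s := (ancs (b.support ∪ F.support)).filter (fun J => J.set ⊆ I.set))
    (by
      intro J hJ
      by_cases hsub : J.set ⊆ I.set
      · have hmem : J ∈ {J : DyadicInterval | J.set ⊆ I.set} := hsub
        rw [Set.indicator_of_mem hmem]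
        by_contra hne
        exact hJ (Finset.mem_filter.mpr ⟨haarCoeff_DeltaBil_support (by
          intro hc
          apply hne
          rw [hc, smul_zero]), hsub⟩)
      · have hmem : J ∉ {J : DyadicInterval | J.set ⊆ I.set} := hsub
        exact Set.indicator_of_notMem hmem _)]
  refine Finset.sum_congr rfl fun J hJ => ?_
  have hmem : J ∈ {J : DyadicInterval | J.set ⊆ I.set} := (Finset.mem_filter.mp hJ).2
  exact Set.indicator_of_mem hmem _

end opcoeffs

lemma telescope (K : DyadicInterval) (t : ℝ) :
    ∀ d N, N + d = K.n →
      ∑ m ∈ Finset.Ico N K.n, (K.anc m).haar t * rr (K.anc m) K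
        = K.ind t - (K.len / (K.anc N).len) * (K.anc N).ind t := by
  intro d
  induction d with
  | zero =>
    intro N hN
    rw [show N = K.n by omega, anc_self, Finset.Ico_self, Finset.sum_empty,
      div_self K.len_pos.ne']
    ring
  | succ d ih =>
    intro N hN
    have hNlt : N < K.n := by omega
    rw [Finset.sum_eq_sum_Ico_succ_bot hNlt, ih (N+1) (by omega)]
    set P := K.anc N with hP
    set C := K.anc (N+1) with hC
    have hCP : C.set ⊆ P.set := anc_subset_anc (by omega) (by omega)
    have hCneP : C ≠ P := by
      intro hc
      have h1 : C.n = N + 1 := rfl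
      rw [hc] at h1
      have h2 : P.n = N := rfl
      omega
    have hKC : K.set ⊆ C.set := subset_anc (by omega)
    have hor : C = P.left ∨ C = P.right := by
      rcases subset_left_or_right hCP hCneP with h' | h'
      · left
        obtain ⟨_, he⟩ := eq_anc_of_subset h'
        have : P.left.n = C.n := by simp [hP, hC]
        rw [he, this, anc_self]
      · right
        obtain ⟨_, he⟩ := eq_anc_of_subset h'
        have : P.right.n = C.n := by simp [hP, hC]
        rw [he, this, anc_self]
    have hPlen := P.len_pos
    have hClen := C.len_pos
    rcases hor with hor | hor
    · have hrr : rr P K = (Real.sqrt P.len)⁻¹ * K.len := r_left (by rw [← hor]; exact hKC)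
      have hh : P.haar t = (Real.sqrt P.len)⁻¹ * (P.left.ind t - P.right.ind t) := rfl
      rw [hrr, hh, hor, len_left, ind_split P t]
      have hs := sqrt_inv_mul_self P
      have h2 : (Real.sqrt P.len)⁻¹ * (P.left.ind t - P.right.ind t) * ((Real.sqrt P.len)⁻¹ * K.len)
          = P.len⁻¹ * K.len * (P.left.ind t - P.right.ind t) := by
        rw [← hs]; ring
      rw [h2]
      field_simp
      ring
    · have hrr : rr P K = -((Real.sqrt P.len)⁻¹ * K.len) := r_right (by rw [← hor]; exact hKC)
      have hh : P.haar t = (Real.sqrt P.len)⁻¹ * (P.left.ind t - P.right.ind t) := rfl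
      rw [hrr, hh, hor, len_right, ind_split P t]
      have hs := sqrt_inv_mul_self P
      have h2 : (Real.sqrt P.len)⁻¹ * (P.left.ind t - P.right.ind t) * -((Real.sqrt P.len)⁻¹ * K.len)
          = -(P.len⁻¹ * K.len) * (P.left.ind t - P.right.ind t) := by
        rw [← hs]; ring
      rw [h2]
      field_simp
      ring

lemma sum_haar_rr {S : Finset DyadicInterval} {K : DyadicInterval} (hK : K ∈ S)
    (I : DyadicInterval) (t : ℝ) :
    ∑ J ∈ (ancs S).filter (fun J => J.set ⊆ I.set), J.haar t * rr J K
      = if K.set ⊆ I.set then K.ind t - (K.len / I.len) * I.ind t else 0 := by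
  by_cases hKI : K.set ⊆ I.set
  · rw [if_pos hKI]
    have hInK : I.n ≤ K.n := n_le_of_subset hKI
    have hIanc : I = K.anc I.n := (eq_anc_of_subset hKI).2
    have himg : (Finset.Ico I.n K.n).image (fun m => K.anc m)
        ⊆ (ancs S).filter (fun J => J.set ⊆ I.set) := by
      intro J hJ
      rw [Finset.mem_image] at hJ
      obtain ⟨m, hm, hJm⟩ := hJ
      rw [Finset.mem_Ico] at hm
      subst hJm
      rw [Finset.mem_filter]
      refine ⟨mem_ancs hK (subset_anc hm.2.le) (by simpa using hm.2), ?_⟩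
      rw [hIanc]
      exact anc_subset_anc hm.1 hm.2.le
    rw [← Finset.sum_subset himg (by
      intro J hJ hJimg
      rw [Finset.mem_filter] at hJ
      by_contra hne
      have hrne : rr J K ≠ 0 := by
        intro hc; apply hne; rw [hc, mul_zero]
      obtain ⟨h1, h2⟩ := r_ne_zero_cases hrne
      apply hJimg
      rw [Finset.mem_image]
      refine ⟨J.n, ?_, ((eq_anc_of_subset h1).2).symm⟩
      rw [Finset.mem_Ico]
      exact ⟨n_le_of_subset hJ.2, h2⟩)]
    rw [Finset.sum_image (by
      intro m _ m' _ h
      have := congrArg DyadicInterval.n h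
      simpa using this)]
    rw [telescope K t (K.n - I.n) I.n (by omega), ← hIanc]
  · rw [if_neg hKI]
    apply Finset.sum_eq_zero
    intro J hJ
    rw [Finset.mem_filter] at hJ
    by_contra hne
    have hrne : rr J K ≠ 0 := by
      intro hc; apply hne; rw [hc, mul_zero]
    obtain ⟨h1, _⟩ := r_ne_zero_cases hrne
    exact hKI (h1.trans hJ.2)

section opcoeffs2

variable {H : Type*} [NormedAddCommGroup H] [InnerProductSpace ℂ H] [CompleteSpace H]

lemma PIBF_DeltaBil_eq (b F : OpCoeffs H) (I : DyadicInterval) (e : H) (t : ℝ) :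
    PIBF (DeltaBil b F) I t e
      = ∑ K ∈ (b.support ∪ F.support).filter (fun K => K.set ⊆ I.set),
          (K.len⁻¹ * K.ind t - I.len⁻¹ * I.ind t) •
            ((ContinuousLinearMap.adjoint (b K) ∘L F K) e) := by
  rw [PIBF_eq_sum, ContinuousLinearMap.sum_apply]
  have step1 : ∀ J ∈ (ancs (b.support ∪ F.support)).filter (fun J => J.set ⊆ I.set),
      (J.haar t • haarCoeff (DeltaBil b F) J) e
        = ∑ K ∈ b.support ∪ F.support,
            (K.len⁻¹ * (J.haar t * rr J K)) • ((ContinuousLinearMap.adjoint (b K) ∘L F K) e) := by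
    intro J _
    rw [haarCoeff_DeltaBil, ContinuousLinearMap.smul_apply, ContinuousLinearMap.sum_apply,
      Finset.smul_sum]
    refine Finset.sum_congr rfl fun K _ => ?_
    rw [ContinuousLinearMap.smul_apply, smul_smul]
    congr 1
    ring
  rw [Finset.sum_congr rfl step1, Finset.sum_comm]
  have step2 : ∀ K ∈ b.support ∪ F.support,
      (∑ J ∈ (ancs (b.support ∪ F.support)).filter (fun J => J.set ⊆ I.set),
        (K.len⁻¹ * (J.haar t * rr J K)) • ((ContinuousLinearMap.adjoint (b K) ∘L F K) e))
      = (if K.set ⊆ I.set then (K.len⁻¹ * K.ind t - I.len⁻¹ * I.ind t) else 0) •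
          ((ContinuousLinearMap.adjoint (b K) ∘L F K) e) := by
    intro K hK
    have : ∀ J, (K.len⁻¹ * (J.haar t * rr J K)) • ((ContinuousLinearMap.adjoint (b K) ∘L F K) e)
        = (K.len⁻¹ • (J.haar t * rr J K)) • ((ContinuousLinearMap.adjoint (b K) ∘L F K) e) := by
      intro J; rw [smul_eq_mul]
    simp_rw [this, smul_assoc, ← Finset.smul_sum, ← Finset.sum_smul, sum_haar_rr hK I t]
    by_cases hKI : K.set ⊆ I.set
    · simp only [if_pos hKI]
      rw [smul_smul]
      have hKl := K.len_pos.ne'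
      have hIl := I.len_pos.ne'
      have hsc : K.len⁻¹ * (K.ind t - K.len / I.len * I.ind t)
          = K.len⁻¹ * K.ind t - I.len⁻¹ * I.ind t := by
        field_simp
        try ring
      rw [hsc]
    · simp only [if_neg hKI]
      simp
  rw [Finset.sum_congr rfl step2]
  simp_rw [ite_smul, zero_smul, ← Finset.sum_filter]

end opcoeffs2
end DeltaAux
end
noncomputable section
open MeasureTheory Finset DyadicInterval ContinuousLinearMap
namespace DeltaAux
set_option linter.unusedSectionVars false
set_option maxHeartbeats 1000000
set_option synthInstance.maxHeartbeats 400000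

section BMframework

variable {E : Type*} [NormedAddCommGroup E] [NormedSpace ℝ E] [CompleteSpace E]

/-- bounded measurable functions on the circle -/
def BM (f : ℝ → E) : Prop :=
  AEStronglyMeasurable f circleMeasure ∧ ∃ C, ∀ t, ‖f t‖ ≤ C

lemma BM.const (x : E) : BM (fun _ : ℝ => x) :=
  ⟨aestronglyMeasurable_const, ‖x‖, fun _ => le_refl _⟩

lemma BM.zero : BM (fun _ : ℝ => (0 : E)) := BM.const 0

lemma BM.smul_const {c : ℝ → ℝ} (hm : Measurable c) {C : ℝ} (hb : ∀ t, |c t| ≤ C) (x : E) :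
    BM (fun t => c t • x) := by
  refine ⟨?_, C * ‖x‖, fun t => ?_⟩
  · exact (continuous_id.smul continuous_const).comp_aestronglyMeasurable
      hm.aestronglyMeasurable
  · rw [norm_smul, Real.norm_eq_abs]
    exact mul_le_mul_of_nonneg_right (hb t) (norm_nonneg x)

lemma BM.add {f g : ℝ → E} (hf : BM f) (hg : BM g) : BM (fun t => f t + g t) := by
  obtain ⟨hmf, Cf, hbf⟩ := hf
  obtain ⟨hmg, Cg, hbg⟩ := hg
  refine ⟨hmf.add hmg, Cf + Cg, fun t => ?_⟩
  calc ‖f t + g t‖ ≤ ‖f t‖ + ‖g t‖ := norm_add_le _ _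
  _ ≤ Cf + Cg := add_le_add (hbf t) (hbg t)

lemma BM.sum {ι : Type*} {s : Finset ι} {f : ι → ℝ → E} (h : ∀ i ∈ s, BM (f i)) :
    BM (fun t => ∑ i ∈ s, f i t) := by
  classical
  induction s using Finset.induction with
  | empty => simpa using BM.zero
  | @insert a s ha ih =>
    have : (fun t => ∑ i ∈ insert a s, f i t)
        = fun t => f a t + ∑ i ∈ s, f i t := by
      funext t; rw [Finset.sum_insert ha]
    rw [this]
    exact (h a (Finset.mem_insert_self a s)).add
      (ih fun i hi => h i (Finset.mem_insert_of_mem hi))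

lemma BM.smul_fn {c : ℝ → ℝ} (hm : Measurable c) {C : ℝ} (hb : ∀ t, |c t| ≤ C)
    {f : ℝ → E} (hf : BM f) : BM (fun t => c t • f t) := by
  obtain ⟨hmf, Cf, hbf⟩ := hf
  refine ⟨hm.aestronglyMeasurable.smul hmf, C * Cf, fun t => ?_⟩
  rw [norm_smul, Real.norm_eq_abs]
  have h0 : (0:ℝ) ≤ C := le_trans (abs_nonneg _) (hb 0)
  have h1 : (0:ℝ) ≤ Cf := le_trans (norm_nonneg _) (hbf 0)
  exact mul_le_mul (hb t) (hbf t) (norm_nonneg _) h0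

lemma BM.const_smul {f : ℝ → E} (hf : BM f) (a : ℝ) : BM (fun t => a • f t) := by
  obtain ⟨hm, C, hb⟩ := hf
  refine ⟨hm.const_smul a, |a| * C, fun t => ?_⟩
  rw [norm_smul, Real.norm_eq_abs]
  exact mul_le_mul_of_nonneg_left (hb t) (abs_nonneg a)

lemma BM.integrable {f : ℝ → E} (hf : BM f) : Integrable f circleMeasure := by
  obtain ⟨hm, C, hb⟩ := hf
  exact (integrable_const C).mono' hm (ae_of_all _ hb)

lemma BM.memL2 {f : ℝ → E} (hf : BM f) : MemLp f 2 circleMeasure := by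
  obtain ⟨hm, C, hb⟩ := hf
  exact MemLp.of_bound hm C (ae_of_all _ hb)

lemma BM.norm_sq {f : ℝ → E} (hf : BM f) : BM (fun t => ‖f t‖^2) := by
  obtain ⟨hm, C, hb⟩ := hf
  have h0 : (0:ℝ) ≤ C := le_trans (norm_nonneg _) (hb 0)
  refine ⟨(hm.norm.aemeasurable.pow_const 2).aestronglyMeasurable, C^2, fun t => ?_⟩
  rw [Real.norm_eq_abs, abs_of_nonneg (by positivity)]
  calc ‖f t‖^2 ≤ C^2 := by nlinarith [norm_nonneg (f t), hb t]

end BMframework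

section innerlemmas

variable {H : Type*} [NormedAddCommGroup H] [InnerProductSpace ℂ H] [CompleteSpace H]

local notation "⟪" x ", " y "⟫" => @inner ℂ _ _ x y

lemma BM.inner {f g : ℝ → H} (hf : BM f) (hg : BM g) : BM (fun t => ⟪f t, g t⟫) := by
  obtain ⟨hmf, Cf, hbf⟩ := hf
  obtain ⟨hmg, Cg, hbg⟩ := hg
  have h0 : (0:ℝ) ≤ Cf := le_trans (norm_nonneg _) (hbf 0)
  refine ⟨hmf.inner hmg, Cf * Cg, fun t => ?_⟩
  calc ‖⟪f t, g t⟫‖ ≤ ‖f t‖ * ‖g t‖ := norm_inner_le_norm _ _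
  _ ≤ Cf * Cg := mul_le_mul (hbf t) (hbg t) (norm_nonneg _) h0

lemma inner_real_smul_move (r : ℝ) (x y : H) : ⟪x, r • y⟫ = ⟪r • x, y⟫ := by
  rw [RCLike.real_smul_eq_coe_smul (K := ℂ) r x, RCLike.real_smul_eq_coe_smul (K := ℂ) r y,
    inner_smul_left, inner_smul_right, RCLike.conj_ofReal]

lemma inner_real_smul_both (r s : ℝ) (x y : H) :
    ⟪r • x, s • y⟫ = (r * s) • ⟪x, y⟫ := by
  rw [RCLike.real_smul_eq_coe_smul (K := ℂ) r x, RCLike.real_smul_eq_coe_smul (K := ℂ) s y,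
    inner_smul_left, inner_smul_right, RCLike.conj_ofReal,
    RCLike.real_smul_eq_coe_mul (K := ℂ) (r * s)]
  push_cast
  ring

lemma integral_inner_left {f : ℝ → H} (hf : Integrable f circleMeasure) (c : H) :
    ∫ t, ⟪f t, c⟫ ∂circleMeasure = ⟪∫ t, f t ∂circleMeasure, c⟫ := by
  have hpt : ∀ t, ⟪f t, c⟫ = (starRingEnd ℂ) ⟪c, f t⟫ := fun t => (inner_conj_symm _ _).symm
  simp_rw [hpt]
  rw [integral_conj, integral_inner hf, inner_conj_symm]

lemma integral_normsq_eq_re_integral_inner {f : ℝ → H} (hf : BM f) :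
    ∫ t, ‖f t‖^2 ∂circleMeasure = RCLike.re (∫ t, ⟪f t, f t⟫ ∂circleMeasure) := by
  rw [← integral_re (hf.inner hf).integrable]
  refine integral_congr_ae (ae_of_all _ fun t => ?_)
  show ‖f t‖^2 = RCLike.re (inner ℂ (f t) (f t))
  exact (inner_self_eq_norm_sq _).symm

lemma eLp2 {f : ℝ → H} (hf : MemLp f 2 circleMeasure) :
    eLpNorm f 2 circleMeasure
      = ENNReal.ofReal (Real.sqrt (∫ t, ‖f t‖^2 ∂circleMeasure)) := by
  rw [hf.eLpNorm_eq_integral_rpow_norm (by norm_num) (by norm_num)]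
  have h2 : ((2:ℝ≥0∞)).toReal = (2:ℝ) := by norm_num
  rw [h2]
  congr 1
  rw [Real.sqrt_eq_rpow, one_div]
  congr 1
  refine integral_congr_ae (ae_of_all _ fun t => ?_)
  show ‖f t‖ ^ (2:ℝ) = ‖f t‖^2
  rw [show ((2:ℝ)) = ((2:ℕ):ℝ) by norm_num, Real.rpow_natCast]

lemma csL2 {u g : ℝ → H} (hu : MemLp u 2 circleMeasure) (hg : MemLp g 2 circleMeasure) :
    RCLike.re (∫ t, ⟪u t, g t⟫ ∂circleMeasure)
      ≤ (eLpNorm u 2 circleMeasure).toReal * (eLpNorm g 2 circleMeasure).toReal := by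
  have h1 : ∫ t, ⟪u t, g t⟫ ∂circleMeasure = ⟪hu.toLp u, hg.toLp g⟫ := by
    rw [MeasureTheory.L2.inner_def]
    refine integral_congr_ae ?_
    filter_upwards [hu.coeFn_toLp, hg.coeFn_toLp] with t h1 h2
    rw [h1, h2]
  rw [h1]
  calc RCLike.re ⟪hu.toLp u, hg.toLp g⟫ ≤ ‖(⟪hu.toLp u, hg.toLp g⟫ : ℂ)‖ :=
    RCLike.re_le_norm _
  _ ≤ ‖hu.toLp u‖ * ‖hg.toLp g‖ := norm_inner_le_norm _ _
  _ = _ := by rw [MeasureTheory.Lp.norm_toLp u hu, MeasureTheory.Lp.norm_toLp g hg]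

end innerlemmas
end DeltaAux
end
noncomputable section
open MeasureTheory Finset DyadicInterval ContinuousLinearMap
namespace DeltaAux
set_option linter.unusedSectionVars false
set_option maxHeartbeats 1000000
set_option synthInstance.maxHeartbeats 400000

section core

variable {H : Type*} [NormedAddCommGroup H] [InnerProductSpace ℂ H] [CompleteSpace H]

local notation "⟪" x ", " y "⟫" => @inner ℂ _ _ x y

/-- the scalar weight `χ_K/|K| - χ_I/|I|`. -/
def wfn (I K : DyadicInterval) : ℝ → ℝ :=
  fun t => K.len⁻¹ * K.ind t - I.len⁻¹ * I.ind t

lemma measurable_wfn (I K : DyadicInterval) : Measurable (wfn I K) :=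
  ((K.measurable_ind).const_mul _).sub ((I.measurable_ind).const_mul _)

lemma abs_wfn_le (I K : DyadicInterval) (t : ℝ) : |wfn I K t| ≤ K.len⁻¹ + I.len⁻¹ := by
  unfold wfn
  have hK : (0:ℝ) ≤ K.len⁻¹ := inv_nonneg.mpr K.len_pos.le
  have hI : (0:ℝ) ≤ I.len⁻¹ := inv_nonneg.mpr I.len_pos.le
  have h1 : |K.len⁻¹ * K.ind t| ≤ K.len⁻¹ := by
    rw [abs_mul, abs_of_nonneg hK]
    exact mul_le_of_le_one_right hK (K.abs_ind_le t)
  have h2 : |I.len⁻¹ * I.ind t| ≤ I.len⁻¹ := by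
    rw [abs_mul, abs_of_nonneg hI]
    exact mul_le_of_le_one_right hI (I.abs_ind_le t)
  calc |K.len⁻¹ * K.ind t - I.len⁻¹ * I.ind t|
      ≤ |K.len⁻¹ * K.ind t| + |I.len⁻¹ * I.ind t| := abs_sub _ _
  _ ≤ K.len⁻¹ + I.len⁻¹ := add_le_add h1 h2

lemma integrable_wfn (I K : DyadicInterval) : Integrable (wfn I K) circleMeasure :=
  integrable_bdd (measurable_wfn I K) (abs_wfn_le I K)

lemma integral_wfn (I K : DyadicInterval) : ∫ t, wfn I K t ∂circleMeasure = 0 := by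
  unfold wfn
  rw [integral_sub ((K.integrable_ind).const_mul _) ((I.integrable_ind).const_mul _),
    integral_const_mul, integral_const_mul, integral_ind, integral_ind,
    inv_mul_cancel₀ K.len_pos.ne', inv_mul_cancel₀ I.len_pos.ne']
  ring

lemma integral_ind_mul_wfn {I K' : DyadicInterval} (h : K'.set ⊆ I.set) (K : DyadicInterval)
    (hK : K = I) : ∫ t, I.ind t * wfn I K' t ∂circleMeasure = 0 := by
  subst hK
  unfold wfn
  have hpt : ∀ t, K.ind t * (K'.len⁻¹ * K'.ind t - K.len⁻¹ * K.ind t)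
      = K'.len⁻¹ * (K.ind t * K'.ind t) - K.len⁻¹ * (K.ind t * K.ind t) := by
    intro t; ring
  simp_rw [hpt]
  rw [integral_sub ((integrable_ind_mul_ind _ _).const_mul _)
    ((integrable_ind_mul_ind _ _).const_mul _), integral_const_mul, integral_const_mul,
    intII_subset' h, intII_subset (subset_refl _),
    inv_mul_cancel₀ K'.len_pos.ne', inv_mul_cancel₀ K.len_pos.ne']
  ring

/-- the finite-sum representative of `P_I Δ(B,F) e`. -/
def vv (b F : OpCoeffs H) (I : DyadicInterval) (e : H) : ℝ → H :=
  fun t => ∑ K ∈ (b.support ∪ F.support).filter (fun K => K.set ⊆ I.set),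
    wfn I K t • ((ContinuousLinearMap.adjoint (b K) ∘L F K) e)

/-- the finite-sum representative of `P_I F e`. -/
def gg (F : OpCoeffs H) (I : DyadicInterval) (e : H) : ℝ → H :=
  fun t => ∑ J ∈ F.support.filter (fun J => J.set ⊆ I.set), J.haar t • (F J e)

lemma PIBF_eq_vv (b F : OpCoeffs H) (I : DyadicInterval) (e : H) :
    (fun t => PIBF (DeltaBil b F) I t e) = vv b F I e := by
  funext t
  rw [PIBF_DeltaBil_eq]
  rfl

lemma PIB_eq_gg (F : OpCoeffs H) (I : DyadicInterval) (e : H) :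
    (fun t => PIB F I t e) = gg F I e := by
  funext t
  rw [PIB, gg, ContinuousLinearMap.sum_apply]
  refine Finset.sum_congr rfl fun J _ => ?_
  rw [ContinuousLinearMap.smul_apply]

lemma BM_vv (b F : OpCoeffs H) (I : DyadicInterval) (e : H) : BM (vv b F I e) :=
  BM.sum fun K _ => BM.smul_const (measurable_wfn I K) (abs_wfn_le I K) _

lemma BM_gg (F : OpCoeffs H) (I : DyadicInterval) (e : H) : BM (gg F I e) :=
  BM.sum fun J _ => BM.smul_const J.measurable_haar (J.abs_haar_le) _

lemma BM_para (b : OpCoeffs H) (f : ℝ → H) : BM (para b f) :=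
  BM.sum fun K _ => BM.smul_const K.measurable_haar (K.abs_haar_le) _

lemma integral_vv (b F : OpCoeffs H) (I : DyadicInterval) (e : H) :
    ∫ t, vv b F I e t ∂circleMeasure = 0 := by
  unfold vv
  rw [integral_finset_sum _
    (fun K _ => ((integrable_wfn I K).smul_const _))]
  refine Finset.sum_eq_zero fun K _ => ?_
  rw [integral_smul_const, integral_wfn, zero_smul]

lemma integral_ind_smul_vv (b F : OpCoeffs H) (I : DyadicInterval) (e : H) :
    ∫ t, I.ind t • vv b F I e t ∂circleMeasure = 0 := by
  have hpt : ∀ t, I.ind t • vv b F I e t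
      = ∑ K ∈ (b.support ∪ F.support).filter (fun K => K.set ⊆ I.set),
          (I.ind t * wfn I K t) • ((ContinuousLinearMap.adjoint (b K) ∘L F K) e) := by
    intro t
    rw [vv, Finset.smul_sum]
    exact Finset.sum_congr rfl fun K _ => by rw [smul_smul]
  simp_rw [hpt]
  rw [integral_finset_sum _ (fun K _ => Integrable.smul_const (by
    refine integrable_bdd ((I.measurable_ind).mul (measurable_wfn I K))
      (C := 1 * (K.len⁻¹ + I.len⁻¹)) fun t => ?_
    rw [abs_mul]
    exact mul_le_mul (I.abs_ind_le t) (abs_wfn_le I K t) (abs_nonneg _) zero_le_one) _)]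
  refine Finset.sum_eq_zero fun K hK => ?_
  rw [integral_smul_const,
    integral_ind_mul_wfn (Finset.mem_filter.mp hK).2 I rfl, zero_smul]

lemma integral_wfn_smul_vv {b F : OpCoeffs H} {I : DyadicInterval} {e : H}
    {K : DyadicInterval} (hK : K ∈ (b.support ∪ F.support).filter (fun K => K.set ⊆ I.set)) :
    ∫ t, wfn I K t • vv b F I e t ∂circleMeasure = avg (vv b F I e) K := by
  have hpt : ∀ t, wfn I K t • vv b F I e t
      = K.len⁻¹ • (K.ind t • vv b F I e t) - I.len⁻¹ • (I.ind t • vv b F I e t) := by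
    intro t
    rw [wfn, smul_smul, smul_smul, ← sub_smul]
  simp_rw [hpt]
  have hBM1 : BM (fun t => K.ind t • vv b F I e t) :=
    BM.smul_fn K.measurable_ind K.abs_ind_le (BM_vv b F I e)
  have hBM2 : BM (fun t => I.ind t • vv b F I e t) :=
    BM.smul_fn I.measurable_ind I.abs_ind_le (BM_vv b F I e)
  rw [integral_sub ((hBM1.const_smul _).integrable) ((hBM2.const_smul _).integrable),
    integral_smul, integral_smul, integral_ind_smul_vv, smul_zero, sub_zero,
    avg, setIntegral_eq_ind_smul]

lemma ID1 (b F : OpCoeffs H) (I : DyadicInterval) (e : H) :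
    ∫ t, ⟪vv b F I e t, vv b F I e t⟫ ∂circleMeasure
      = ∑ K ∈ (b.support ∪ F.support).filter (fun K => K.set ⊆ I.set),
          ⟪(b K) (avg (vv b F I e) K), (F K) e⟫ := by
  have hpt : ∀ t, ⟪vv b F I e t, vv b F I e t⟫
      = ∑ K ∈ (b.support ∪ F.support).filter (fun K => K.set ⊆ I.set),
          ⟪wfn I K t • vv b F I e t, (ContinuousLinearMap.adjoint (b K) ∘L F K) e⟫ := by
    intro t
    conv_lhs => rw [show vv b F I e t = ∑ K ∈ (b.support ∪ F.support).filter
      (fun K => K.set ⊆ I.set), wfn I K t • ((ContinuousLinearMap.adjoint (b K) ∘L F K) e)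
      from rfl]
    rw [inner_sum]
    exact Finset.sum_congr rfl fun K _ => inner_real_smul_move _ _ _
  simp_rw [hpt]
  rw [integral_finset_sum _ (fun K _ => (BM.inner
    (BM.smul_fn (measurable_wfn I K) (abs_wfn_le I K) (BM_vv b F I e))
    (BM.const _)).integrable)]
  refine Finset.sum_congr rfl fun K hK => ?_
  rw [integral_inner_left (BM.smul_fn (measurable_wfn I K) (abs_wfn_le I K)
    (BM_vv b F I e)).integrable, integral_wfn_smul_vv hK,
    ContinuousLinearMap.comp_apply, ContinuousLinearMap.adjoint_inner_right]

lemma hhOrtho (K J : DyadicInterval) :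
    ∫ t, K.haar t * J.haar t ∂circleMeasure = if K = J then 1 else 0 := by
  by_cases h : K = J
  · rw [if_pos h, h, integral_haar_mul_haar_self]
  · rw [if_neg h, integral_haar_mul_haar_ne h]

lemma ID2 (b F : OpCoeffs H) (I : DyadicInterval) (e : H) :
    ∫ t, ⟪para b (vv b F I e) t, gg F I e t⟫ ∂circleMeasure
      = ∑ K ∈ (b.support ∪ F.support).filter (fun K => K.set ⊆ I.set),
          ⟪(b K) (avg (vv b F I e) K), (F K) e⟫ := by
  have hpt : ∀ t, ⟪para b (vv b F I e) t, gg F I e t⟫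
      = ∑ K ∈ b.support, ∑ J ∈ F.support.filter (fun J => J.set ⊆ I.set),
          (K.haar t * J.haar t) • ⟪(b K) (avg (vv b F I e) K), (F J) e⟫ := by
    intro t
    rw [show para b (vv b F I e) t = ∑ K ∈ b.support,
      K.haar t • (b K) (avg (vv b F I e) K) from rfl,
      show gg F I e t = ∑ J ∈ F.support.filter (fun J => J.set ⊆ I.set),
        J.haar t • (F J e) from rfl, sum_inner]
    refine Finset.sum_congr rfl fun K _ => ?_
    rw [inner_sum]
    exact Finset.sum_congr rfl fun J _ => inner_real_smul_both _ _ _ _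
  simp_rw [hpt]
  rw [integral_finset_sum _ (fun K _ => integrable_finset_sum _
    (fun J _ => ((integrable_haar_mul_haar K J).smul_const _)))]
  have step : ∀ K ∈ b.support,
      (∫ t, ∑ J ∈ F.support.filter (fun J => J.set ⊆ I.set),
        (K.haar t * J.haar t) • ⟪(b K) (avg (vv b F I e) K), (F J) e⟫ ∂circleMeasure)
      = if K ∈ F.support.filter (fun J => J.set ⊆ I.set)
          then ⟪(b K) (avg (vv b F I e) K), (F K) e⟫ else 0 := by
    intro K _
    rw [integral_finset_sum _ (fun J _ => ((integrable_haar_mul_haar K J).smul_const _))]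
    have : ∀ J ∈ F.support.filter (fun J => J.set ⊆ I.set),
        (∫ t, (K.haar t * J.haar t) • ⟪(b K) (avg (vv b F I e) K), (F J) e⟫ ∂circleMeasure)
        = if K = J then ⟪(b K) (avg (vv b F I e) K), (F J) e⟫ else 0 := by
      intro J _
      rw [integral_smul_const, hhOrtho K J, ite_smul, one_smul, zero_smul]
    rw [Finset.sum_congr rfl this, Finset.sum_ite_eq]
  rw [Finset.sum_congr rfl step, Finset.sum_ite_mem]
  refine Finset.sum_subset ?_ ?_
  · intro K hK
    rw [Finset.mem_inter, Finset.mem_filter] at hK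
    rw [Finset.mem_filter, Finset.mem_union]
    exact ⟨Or.inl hK.1, hK.2.2⟩
  · intro K hK hKn
    rw [Finset.mem_filter, Finset.mem_union] at hK
    rw [Finset.mem_inter, Finset.mem_filter] at hKn
    by_cases hb : K ∈ b.support
    · have hf : K ∉ F.support := by
        intro hc
        exact hKn ⟨hb, hc, hK.2⟩
      rw [Finsupp.notMem_support_iff.mp hf, ContinuousLinearMap.zero_apply, inner_zero_right]
    · rw [Finsupp.notMem_support_iff.mp hb, ContinuousLinearMap.zero_apply, inner_zero_left]

lemma para_smul (b : OpCoeffs H) (r : ℝ) (f : ℝ → H) :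
    para b (fun t => r • f t) = fun t => r • para b f t := by
  funext t
  rw [show para b (fun t => r • f t) t = ∑ K ∈ b.support,
    K.haar t • (b K) (avg (fun t => r • f t) K) from rfl,
    show para b f t = ∑ K ∈ b.support, K.haar t • (b K) (avg f K) from rfl,
    Finset.smul_sum]
  refine Finset.sum_congr rfl fun K _ => ?_
  have havg : avg (fun t => r • f t) K = r • avg f K := by
    rw [avg, avg, integral_smul, smul_comm]
  rw [havg, ContinuousLinearMap.map_smul_of_tower, smul_comm]

end core
end DeltaAux
end
noncomputable section
open MeasureTheory Finset DyadicInterval ContinuousLinearMap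
namespace DeltaAux
set_option linter.unusedSectionVars false
set_option maxHeartbeats 1000000
set_option synthInstance.maxHeartbeats 400000

variable {H : Type*} [NormedAddCommGroup H] [InnerProductSpace ℂ H] [CompleteSpace H]

lemma key (b F : OpCoeffs H) (I : DyadicInterval) (e : H) :
    eLpNorm (fun t => PIBF (DeltaBil b F) I t e) 2 circleMeasure ≤
      l2NormOp (para b) * eLpNorm (fun t => PIB F I t e) 2 circleMeasure := by
  rw [PIBF_eq_vv, PIB_eq_gg]
  set v := vv b F I e with hv
  set g := gg F I e with hgdef
  have hBMv : BM v := BM_vv b F I e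
  have hBMg : BM g := BM_gg F I e
  have hMv : MemLp v 2 circleMeasure := hBMv.memL2
  have hMg : MemLp g 2 circleMeasure := hBMg.memL2
  set Nv := ∫ t, ‖v t‖^2 ∂circleMeasure with hNv
  have hNvnn : 0 ≤ Nv := integral_nonneg (fun t => by positivity)
  set c := Real.sqrt Nv with hc
  have hcnn : 0 ≤ c := Real.sqrt_nonneg _
  have hEv : eLpNorm v 2 circleMeasure = ENNReal.ofReal c := eLp2 hMv
  by_cases hc0 : c = 0
  · rw [hEv, hc0, ENNReal.ofReal_zero]
    positivity
  have hcpos : 0 < c := lt_of_le_of_ne hcnn (Ne.symm hc0)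
  set w := para b v with hw
  have hBMw : BM w := BM_para b v
  have hMw : MemLp w 2 circleMeasure := hBMw.memL2
  set cw := (eLpNorm w 2 circleMeasure).toReal with hcw
  set cg := (eLpNorm g 2 circleMeasure).toReal with hcg
  have hmain : c * c ≤ cw * cg := by
    have h1 : c * c = Nv := Real.mul_self_sqrt hNvnn
    have h2 : Nv = RCLike.re (∫ t, (inner ℂ (v t) (v t) : ℂ) ∂circleMeasure) :=
      integral_normsq_eq_re_integral_inner hBMv
    have h3 : (∫ t, (inner ℂ (v t) (v t) : ℂ) ∂circleMeasure)
        = ∫ t, (inner ℂ (w t) (g t) : ℂ) ∂circleMeasure := by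
      rw [hv, hgdef, hw, ID1 b F I e, ← ID2 b F I e]
    have h4 := csL2 hMw hMg
    rw [h1, h2, h3]
    exact h4
  set f₀ := fun t => c⁻¹ • v t with hf0
  have hmem : MemLp f₀ 2 circleMeasure := (hBMv.const_smul _).memL2
  have hmean : (∫ t, f₀ t ∂circleMeasure) = 0 := by
    rw [hf0]
    rw [integral_smul, hv, integral_vv, smul_zero]
  have hEf0 : eLpNorm f₀ 2 circleMeasure = 1 := by
    have h5 : eLpNorm f₀ 2 circleMeasure = ‖c⁻¹‖₊ • eLpNorm v 2 circleMeasure :=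
      eLpNorm_const_smul c⁻¹ v 2 circleMeasure
    rw [h5, hEv, ENNReal.smul_def, smul_eq_mul,
      ← enorm_eq_nnnorm, Real.enorm_eq_ofReal (inv_nonneg.mpr hcnn),
      ← ENNReal.ofReal_mul (inv_nonneg.mpr hcnn), inv_mul_cancel₀ hc0,
      ENNReal.ofReal_one]
  have hle : eLpNorm (para b f₀) 2 circleMeasure ≤ l2NormOp (para b) := by
    rw [l2NormOp]
    exact le_iSup (fun f : {f : ℝ → H // MemLp f 2 circleMeasure ∧
        (∫ t, f t ∂circleMeasure) = 0 ∧ eLpNorm f 2 circleMeasure ≤ 1} =>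
      eLpNorm (para b f.1) 2 circleMeasure) ⟨f₀, hmem, hmean, hEf0.le⟩
  have hpara : para b f₀ = fun t => c⁻¹ • w t := by
    rw [hf0, hw, para_smul]
  have hEw : eLpNorm w 2 circleMeasure = ENNReal.ofReal cw := by
    rw [hcw, ENNReal.ofReal_toReal hMw.2.ne]
  have hEg : eLpNorm g 2 circleMeasure = ENNReal.ofReal cg := by
    rw [hcg, ENNReal.ofReal_toReal hMg.2.ne]
  have h6 : eLpNorm (para b f₀) 2 circleMeasure = ENNReal.ofReal (c⁻¹ * cw) := by
    rw [hpara]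
    have h5 : eLpNorm (fun t => c⁻¹ • w t) 2 circleMeasure
        = ‖c⁻¹‖₊ • eLpNorm w 2 circleMeasure := eLpNorm_const_smul c⁻¹ w 2 circleMeasure
    rw [h5, hEw, ENNReal.smul_def, smul_eq_mul,
      ← enorm_eq_nnnorm, Real.enorm_eq_ofReal (inv_nonneg.mpr hcnn),
      ← ENNReal.ofReal_mul (inv_nonneg.mpr hcnn)]
  have hcwnn : 0 ≤ cw := ENNReal.toReal_nonneg
  have hcgnn : 0 ≤ cg := ENNReal.toReal_nonneg
  have h7 : c ≤ (c⁻¹ * cw) * cg := by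
    have h8 := mul_le_mul_of_nonneg_left hmain (inv_nonneg.mpr hcnn)
    calc c = c⁻¹ * (c * c) := by field_simp
    _ ≤ c⁻¹ * (cw * cg) := h8
    _ = (c⁻¹ * cw) * cg := by ring
  rw [hEv]
  calc ENNReal.ofReal c ≤ ENNReal.ofReal ((c⁻¹ * cw) * cg) := ENNReal.ofReal_le_ofReal h7
  _ = ENNReal.ofReal (c⁻¹ * cw) * ENNReal.ofReal cg := ENNReal.ofReal_mul (by positivity)
  _ ≤ l2NormOp (para b) * eLpNorm g 2 circleMeasure := by
      refine mul_le_mul' ?_ ?_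
      · rw [← h6]; exact hle
      · rw [hEg]

end DeltaAux
end
noncomputable section
open MeasureTheory Finset DyadicInterval ContinuousLinearMap
namespace DeltaAux
set_option linter.unusedSectionVars false
set_option maxHeartbeats 1000000
set_option synthInstance.maxHeartbeats 400000

variable {H : Type*} [NormedAddCommGroup H] [InnerProductSpace ℂ H] [CompleteSpace H]

lemma DeltaBil_apply_e (b F : OpCoeffs H) (t : ℝ) (e : H) :
    DeltaBil b F t e = ∑ K ∈ b.support ∪ F.support,
      (K.len⁻¹ * K.ind t) • ((ContinuousLinearMap.adjoint (b K) ∘L F K) e) := by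
  rw [DeltaBil_apply, ContinuousLinearMap.sum_apply]
  exact Finset.sum_congr rfl fun K _ => by rw [ContinuousLinearMap.smul_apply]

lemma integrable_ind_mul_scaled (I K : DyadicInterval) :
    Integrable (fun t => I.ind t * (K.len⁻¹ * K.ind t)) circleMeasure := by
  have : (fun t => I.ind t * (K.len⁻¹ * K.ind t))
      = fun t => K.len⁻¹ * (I.ind t * K.ind t) := by funext t; ring
  rw [this]
  exact (integrable_ind_mul_ind I K).const_mul _

lemma avg_Delta (b F : OpCoeffs H) (I : DyadicInterval) (e : H) :
    avg (fun s => DeltaBil b F s e) I = ∑ K ∈ b.support ∪ F.support,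
      (I.len⁻¹ * (K.len⁻¹ * (∫ t, I.ind t * K.ind t ∂circleMeasure))) •
        ((ContinuousLinearMap.adjoint (b K) ∘L F K) e) := by
  rw [avg, setIntegral_eq_ind_smul]
  have hpt : ∀ s, I.ind s • DeltaBil b F s e = ∑ K ∈ b.support ∪ F.support,
      (I.ind s * (K.len⁻¹ * K.ind s)) • ((ContinuousLinearMap.adjoint (b K) ∘L F K) e) := by
    intro s
    rw [DeltaBil_apply_e, Finset.smul_sum]
    exact Finset.sum_congr rfl fun K _ => by rw [smul_smul]
  simp_rw [hpt]
  rw [integral_finset_sum _ (fun K _ => (integrable_ind_mul_scaled I K).smul_const _),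
    Finset.smul_sum]
  refine Finset.sum_congr rfl fun K _ => ?_
  rw [integral_smul_const, smul_smul]
  congr 1
  have : (fun t => I.ind t * (K.len⁻¹ * K.ind t))
      = fun t => K.len⁻¹ * (I.ind t * K.ind t) := by funext t; ring
  rw [this, integral_const_mul]

lemma pw_Delta (b F : OpCoeffs H) (I : DyadicInterval) (e : H) {t : ℝ} (ht : t ∈ I.set) :
    DeltaBil b F t e - avg (fun s => DeltaBil b F s e) I = vv b F I e t := by
  have hvv : vv b F I e t = ∑ K ∈ b.support ∪ F.support,
      (if K.set ⊆ I.set then wfn I K t else 0) •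
        ((ContinuousLinearMap.adjoint (b K) ∘L F K) e) := by
    rw [vv, Finset.sum_filter]
    refine Finset.sum_congr rfl fun K _ => ?_
    by_cases h : K.set ⊆ I.set <;> simp [h]
  rw [DeltaBil_apply_e, avg_Delta, hvv, ← Finset.sum_sub_distrib]
  refine Finset.sum_congr rfl fun K _ => ?_
  rw [← sub_smul]
  congr 1
  by_cases hKI : K.set ⊆ I.set
  · rw [if_pos hKI, wfn, intII_subset' hKI, inv_mul_cancel₀ K.len_pos.ne',
      ind_of_mem ht, mul_one]
  · rw [if_neg hKI]
    rcases trichotomy I K with h | h | h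
    · rw [intII_subset h, ind_of_mem (h ht), mul_one]
      have h2 : I.len⁻¹ * (K.len⁻¹ * I.len) = K.len⁻¹ := by
        have h3 := I.len_pos.ne'
        field_simp
        try ring
      rw [h2, sub_self]
    · exact absurd h hKI
    · have hq : (∫ s, I.ind s * K.ind s ∂circleMeasure) = 0 := intII_disjoint h
      rw [hq, ind_of_not_mem (fun hc => (Set.disjoint_left.mp h) ht hc)]
      ring

lemma vv_off (b F : OpCoeffs H) (I : DyadicInterval) (e : H) {t : ℝ} (ht : t ∉ I.set) :
    vv b F I e t = 0 := by
  rw [vv]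
  refine Finset.sum_eq_zero fun K hK => ?_
  have hKI := (Finset.mem_filter.mp hK).2
  have h1 : wfn I K t = 0 := by
    rw [wfn, ind_of_not_mem ht, ind_of_not_mem (fun hc => ht (hKI hc))]
    ring
  rw [h1, zero_smul]

lemma Bfun_apply_e (F : OpCoeffs H) (t : ℝ) (e : H) :
    Bfun F t e = ∑ J ∈ F.support, J.haar t • (F J e) := by
  rw [Bfun, ContinuousLinearMap.sum_apply]
  exact Finset.sum_congr rfl fun J _ => by rw [ContinuousLinearMap.smul_apply]

lemma avg_Bfun (F : OpCoeffs H) (I : DyadicInterval) (e : H) :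
    avg (fun s => Bfun F s e) I
      = ∑ J ∈ F.support, (I.len⁻¹ * (∫ s, J.haar s * I.ind s ∂circleMeasure)) • (F J e) := by
  rw [avg, setIntegral_eq_ind_smul]
  have hpt : ∀ s, I.ind s • Bfun F s e
      = ∑ J ∈ F.support, (J.haar s * I.ind s) • (F J e) := by
    intro s
    rw [Bfun_apply_e, Finset.smul_sum]
    refine Finset.sum_congr rfl fun J _ => ?_
    rw [smul_smul, mul_comm]
  simp_rw [hpt]
  rw [integral_finset_sum _ (fun J _ => (integrable_haar_mul_ind J I).smul_const _),
    Finset.smul_sum]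
  refine Finset.sum_congr rfl fun J _ => ?_
  rw [integral_smul_const, smul_smul]

lemma pw_Bfun (F : OpCoeffs H) (I : DyadicInterval) (e : H) {t : ℝ} (ht : t ∈ I.set) :
    Bfun F t e - avg (fun s => Bfun F s e) I = gg F I e t := by
  have hgg : gg F I e t = ∑ J ∈ F.support,
      (if J.set ⊆ I.set then J.haar t else 0) • (F J e) := by
    rw [gg, Finset.sum_filter]
    refine Finset.sum_congr rfl fun J _ => ?_
    by_cases h : J.set ⊆ I.set <;> simp [h]
  rw [Bfun_apply_e, avg_Bfun, hgg, ← Finset.sum_sub_distrib]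
  refine Finset.sum_congr rfl fun J _ => ?_
  rw [← sub_smul]
  congr 1
  by_cases hJI : J.set ⊆ I.set
  · rw [if_pos hJI, r_sup hJI, mul_zero, sub_zero]
  · rw [if_neg hJI]
    rcases trichotomy I J with h | h | h
    · have hne : I ≠ J := by
        intro hc
        exact hJI (by rw [hc])
      rcases subset_left_or_right h hne with hL | hR
      · rw [r_left hL]
        have hhaar : J.haar t = (Real.sqrt J.len)⁻¹ := by
          rw [haar, ind_of_mem (hL ht),
            ind_of_not_mem (fun hc =>
              (Set.disjoint_left.mp J.left_right_disjoint) (hL ht) hc)]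
          ring
        rw [hhaar]
        have h2 : I.len⁻¹ * ((Real.sqrt J.len)⁻¹ * I.len) = (Real.sqrt J.len)⁻¹ := by
          have h3 := I.len_pos.ne'
          have h4 := (Real.sqrt_pos.mpr J.len_pos).ne'
          field_simp
        rw [h2, sub_self]
      · rw [r_right hR]
        have hhaar : J.haar t = -(Real.sqrt J.len)⁻¹ := by
          rw [haar, ind_of_mem (hR ht),
            ind_of_not_mem (fun hc =>
              (Set.disjoint_right.mp J.left_right_disjoint) (hR ht) hc)]
          ring
        rw [hhaar]
        have h2 : I.len⁻¹ * -((Real.sqrt J.len)⁻¹ * I.len) = -(Real.sqrt J.len)⁻¹ := by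
          have h3 := I.len_pos.ne'
          have h4 := (Real.sqrt_pos.mpr J.len_pos).ne'
          field_simp
        rw [h2, sub_self]
    · exact absurd h hJI
    · rw [haar_eq_zero_of_not_mem (fun hc => (Set.disjoint_left.mp h) ht hc),
        r_disj h.symm]
      ring

lemma gg_off (F : OpCoeffs H) (I : DyadicInterval) (e : H) {t : ℝ} (ht : t ∉ I.set) :
    gg F I e t = 0 := by
  rw [gg]
  refine Finset.sum_eq_zero fun J hJ => ?_
  have hJI := (Finset.mem_filter.mp hJ).2
  rw [haar_eq_zero_of_not_mem (fun hc => ht (hJI hc)), zero_smul]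

lemma setInt_eq {f : ℝ → H} (hBM : BM f) (I : DyadicInterval)
    (hoff : ∀ t ∉ I.set, f t = 0) {G : ℝ → H} (hon : ∀ t ∈ I.set, G t = f t) :
    ∫ t in I.set, ‖G t‖^2 = ∫ t, ‖f t‖^2 ∂circleMeasure := by
  have h1 : ∫ t in I.set, ‖G t‖^2 = ∫ t in I.set, ‖f t‖^2 :=
    setIntegral_congr_fun I.measurableSet_set (fun t htI => by rw [hon t htI])
  have hint : IntegrableOn (fun t => ‖f t‖^2) (Set.Ico (0:ℝ) 1) volume :=
    hBM.norm_sq.integrable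
  have h3 := integral_inter_add_diff (μ := volume) (s := Set.Ico (0:ℝ) 1) (t := I.set)
    (f := fun t => ‖f t‖^2) I.measurableSet_set hint
  have h4 : Set.Ico (0:ℝ) 1 ∩ I.set = I.set := Set.inter_eq_right.mpr I.set_subset_Ico01
  have h5 : ∫ t in (Set.Ico (0:ℝ) 1) \ I.set, ‖f t‖^2 = 0 :=
    setIntegral_eq_zero_of_forall_eq_zero fun x hx => by rw [hoff x hx.2]; simp
  rw [h4, h5, add_zero] at h3
  have h6 : ∫ t, ‖f t‖^2 ∂circleMeasure = ∫ t in Set.Ico (0:ℝ) 1, ‖f t‖^2 := rfl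
  rw [h1, h6, h3]

lemma ofReal_half (a X : ℝ) (ha : 0 ≤ a) (hX : 0 ≤ X) :
    ENNReal.ofReal (a * X) ^ (1/2:ℝ)
      = ENNReal.ofReal a ^ (1/2:ℝ) * ENNReal.ofReal (Real.sqrt X) := by
  rw [ENNReal.ofReal_mul ha, ENNReal.mul_rpow_of_nonneg _ _ (by norm_num),
    Real.sqrt_eq_rpow, ENNReal.ofReal_rpow_of_nonneg hX (by norm_num)]

lemma bmo_term_Delta (b F : OpCoeffs H) (I : DyadicInterval) (e : H) :
    ENNReal.ofReal (I.len⁻¹ * ∫ t in I.set,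
        ‖DeltaBil b F t e - avg (fun s => DeltaBil b F s e) I‖^2) ^ (1/2:ℝ)
      = ENNReal.ofReal I.len⁻¹ ^ (1/2:ℝ)
          * eLpNorm (fun t => PIBF (DeltaBil b F) I t e) 2 circleMeasure := by
  have hX : (∫ t in I.set, ‖DeltaBil b F t e - avg (fun s => DeltaBil b F s e) I‖^2)
      = ∫ t, ‖vv b F I e t‖^2 ∂circleMeasure :=
    setInt_eq (BM_vv b F I e) I (fun t ht => vv_off b F I e ht)
      (fun t ht => pw_Delta b F I e ht)
  rw [hX, ofReal_half _ _ (inv_nonneg.mpr I.len_pos.le)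
    (integral_nonneg fun t => by positivity), PIBF_eq_vv, eLp2 (BM_vv b F I e).memL2]

lemma bmo_term_Bfun (F : OpCoeffs H) (I : DyadicInterval) (e : H) :
    ENNReal.ofReal (I.len⁻¹ * ∫ t in I.set,
        ‖Bfun F t e - avg (fun s => Bfun F s e) I‖^2) ^ (1/2:ℝ)
      = ENNReal.ofReal I.len⁻¹ ^ (1/2:ℝ)
          * eLpNorm (fun t => PIB F I t e) 2 circleMeasure := by
  have hX : (∫ t in I.set, ‖Bfun F t e - avg (fun s => Bfun F s e) I‖^2)
      = ∫ t, ‖gg F I e t‖^2 ∂circleMeasure :=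
    setInt_eq (BM_gg F I e) I (fun t ht => gg_off F I e ht)
      (fun t ht => pw_Bfun F I e ht)
  rw [hX, ofReal_half _ _ (inv_nonneg.mpr I.len_pos.le)
    (integral_nonneg fun t => by positivity), PIB_eq_gg, eLp2 (BM_gg F I e).memL2]

lemma sbmo_bound (b F : OpCoeffs H) :
    sbmoNorm (DeltaBil b F) ≤ l2NormOp (para b) * sbmoNorm (Bfun F) := by
  rw [sbmoNorm]
  refine iSup_le fun e => ?_
  have hb : bmoNorm (fun t => DeltaBil b F t e.1)
      ≤ l2NormOp (para b) * bmoNorm (fun t => Bfun F t e.1) := by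
    rw [bmoNorm]
    refine iSup_le fun I => ?_
    calc ENNReal.ofReal (I.len⁻¹ * ∫ t in I.set,
          ‖DeltaBil b F t e.1 - avg (fun s => DeltaBil b F s e.1) I‖^2) ^ (1/2:ℝ)
        = ENNReal.ofReal I.len⁻¹ ^ (1/2:ℝ)
          * eLpNorm (fun t => PIBF (DeltaBil b F) I t e.1) 2 circleMeasure :=
          bmo_term_Delta b F I e.1
    _ ≤ ENNReal.ofReal I.len⁻¹ ^ (1/2:ℝ)
          * (l2NormOp (para b) * eLpNorm (fun t => PIB F I t e.1) 2 circleMeasure) :=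
          mul_le_mul_right (key b F I e.1) _
    _ = l2NormOp (para b) * (ENNReal.ofReal I.len⁻¹ ^ (1/2:ℝ)
          * eLpNorm (fun t => PIB F I t e.1) 2 circleMeasure) := by ring
    _ = l2NormOp (para b) * (ENNReal.ofReal (I.len⁻¹ * ∫ t in I.set,
          ‖Bfun F t e.1 - avg (fun s => Bfun F s e.1) I‖^2) ^ (1/2:ℝ)) := by
          rw [bmo_term_Bfun]
    _ ≤ l2NormOp (para b) * bmoNorm (fun t => Bfun F t e.1) := by
          refine mul_le_mul_right ?_ _
          rw [bmoNorm]
          exact le_iSup (fun I => ENNReal.ofReal (I.len⁻¹ * ∫ t in I.set,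
            ‖Bfun F t e.1 - avg (fun s => Bfun F s e.1) I‖^2) ^ (1/2:ℝ)) I
  refine hb.trans (mul_le_mul_right ?_ _)
  rw [sbmoNorm]
  exact le_iSup (fun e : {e : H // ‖e‖ = 1} =>
    bmoNorm fun t => Bfun F t e.1) e

end DeltaAux
end

/-- `‖Δ(B,F)‖_{SBMO} ≤ C ‖π_B‖ ‖F‖_{SBMO}`, via
`‖P_I Δ(B,F) e‖_{L²} ≤ ‖π_B‖ ‖P_I F_e‖_{L²}`. -/
theorem DeltaBil_sbmo_norm_le :
    ∃ C : ℝ≥0∞, 0 < C ∧ C ≠ ⊤ ∧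
      ∀ (H : Type) [NormedAddCommGroup H] [InnerProductSpace ℂ H] [CompleteSpace H] (b F : OpCoeffs H),
        (sbmoNorm (DeltaBil b F) ≤ C * (l2NormOp (para b) * sbmoNorm (Bfun F))) ∧
        ∀ (I : DyadicInterval) (e : H),
          eLpNorm (fun t => (PIBF (DeltaBil b F) I t) e) 2 circleMeasure ≤
            l2NormOp (para b) * eLpNorm (fun t => (PIB F I t) e) 2 circleMeasure := by
  refine ⟨1, by norm_num, by norm_num, fun H _ _ _ b F =>
    ⟨?_, fun I e => DeltaAux.key b F I e⟩⟩
  rw [one_mul]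
  exact DeltaAux.sbmo_bound b F
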